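/- arXiv:2307.10446 — 8 statements merged into one kernel-verified Lean document; each statement's English description precedes it below -/
import Mathlib

section
/- Let H be a complex (or real) Hilbert space and let a ∈ (0,1). Then the kernel k(x,y) = ‖x‖^{2a} + ‖y‖^{2a} − ‖x−y‖^{2a} is positive definite on H. -/
open Complex Finset

/-- A (real-valued, viewed as complex-valued) kernel `k : X → X → ℝ` is positive definite if
every finite quadratic form `∑_{j,i} conj (c i) * k (x i) (x j) * c j` (with complex
coefficients) is a nonnegative real number. -/
def IsPositiveDefiniteKernelR {X : Type*} (k : X → X → ℝ) : Prop :=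
  ∀ (N : ℕ) (x : Fin N → X) (c : Fin N → ℂ),
    (∑ j, ∑ i, (starRingEnd ℂ) (c i) * (k (x i) (x j) : ℂ) * c j).im = 0 ∧
    0 ≤ (∑ j, ∑ i, (starRingEnd ℂ) (c i) * (k (x i) (x j) : ℂ) * c j).re

section AuxFBM

open MeasureTheory Set

variable {ι : Type*} [Fintype ι] {F : Type*} [NormedAddCommGroup F] [InnerProductSpace ℝ F]





lemma aux_gram_nonneg (x : ι → F) (v : ι → ℝ) :
    0 ≤ ∑ i, ∑ j, v i * v j * (inner ℝ (x i) (x j) : ℝ) := by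
  have h : ∑ i, ∑ j, v i * v j * (inner ℝ (x i) (x j) : ℝ)
      = (inner ℝ (∑ i, v i • x i) (∑ j, v j • x j) : ℝ) := by
    rw [sum_inner]
    refine Finset.sum_congr rfl fun i _ => ?_
    rw [inner_sum]
    refine Finset.sum_congr rfl fun j _ => ?_
    rw [real_inner_smul_left, real_inner_smul_right]; ring
  rw [h]
  exact real_inner_self_nonneg

lemma aux_gram_fact (x : ι → F) [DecidableEq ι] :
    ∃ L : Matrix ι ι ℝ, ∀ i j, (inner ℝ (x i) (x j) : ℝ) = ∑ k, L k i * L k j := by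
  have hpsd : Matrix.PosSemidef (Matrix.of fun i j => (inner ℝ (x i) (x j) : ℝ)) := by
    rw [Matrix.posSemidef_iff_dotProduct_mulVec]
    constructor
    · ext i j
      simp [Matrix.conjTranspose_apply, real_inner_comm]
    · intro y
      have h : dotProduct (star y)
            ((Matrix.of fun i j => (inner ℝ (x i) (x j) : ℝ)).mulVec y)
          = ∑ i, ∑ j, y i * y j * (inner ℝ (x i) (x j) : ℝ) := by
        simp only [dotProduct, Matrix.mulVec, Matrix.of_apply, Pi.star_apply, star_trivial,
          Finset.mul_sum]
        exact Finset.sum_congr rfl fun i _ => Finset.sum_congr rfl fun j _ => by ring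
      rw [h]
      exact aux_gram_nonneg x y
  open scoped MatrixOrder in
  obtain ⟨B, hB⟩ := CStarAlgebra.nonneg_iff_eq_star_mul_self.mp hpsd.nonneg
  refine ⟨B, fun i j => ?_⟩
  have h2 := congrArg (fun M => M i j) hB
  simpa [Matrix.mul_apply, Matrix.conjTranspose_apply] using h2

lemma aux_schur {A : ι → ι → ℝ} (hA : ∀ v : ι → ℝ, 0 ≤ ∑ i, ∑ j, v i * v j * A i j)
    {B : ι → ι → ℝ} {L : Matrix ι ι ℝ} (hB : ∀ i j, B i j = ∑ k, L k i * L k j)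
    (v : ι → ℝ) : 0 ≤ ∑ i, ∑ j, v i * v j * (A i j * B i j) := by
  have h1 : ∑ i, ∑ j, v i * v j * (A i j * B i j)
      = ∑ i, ∑ j, ∑ k, (v i * L k i) * (v j * L k j) * A i j := by
    refine Finset.sum_congr rfl fun i _ => Finset.sum_congr rfl fun j _ => ?_
    rw [hB, Finset.mul_sum, Finset.mul_sum]
    exact Finset.sum_congr rfl fun k _ => by ring
  have h2 : ∑ i, ∑ j, ∑ k, (v i * L k i) * (v j * L k j) * A i j
      = ∑ k, ∑ i, ∑ j, (v i * L k i) * (v j * L k j) * A i j := by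
    rw [show (∑ i, ∑ j, ∑ k, (v i * L k i) * (v j * L k j) * A i j)
        = ∑ i, ∑ k, ∑ j, (v i * L k i) * (v j * L k j) * A i j from
      Finset.sum_congr rfl fun i _ => Finset.sum_comm]
    exact Finset.sum_comm
  rw [h1, h2]
  exact Finset.sum_nonneg fun k _ => hA _

lemma aux_pow_nonneg (x : ι → F) (n : ℕ) (v : ι → ℝ) :
    0 ≤ ∑ i, ∑ j, v i * v j * (inner ℝ (x i) (x j) : ℝ) ^ n := by
  classical
  induction n generalizing v with
  | zero =>
      simp only [pow_zero, mul_one]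
      have h : ∑ i, ∑ j, v i * v j = (∑ i, v i) ^ 2 := by
        rw [sq, Finset.sum_mul_sum]
      rw [h]; positivity
  | succ n ih =>
      obtain ⟨L, hL⟩ := aux_gram_fact x
      have h := aux_schur (A := fun i j => (inner ℝ (x i) (x j) : ℝ) ^ n) ih hL v
      simpa [← pow_succ] using h







lemma aux_real_exp_tsum (r : ℝ) : Real.exp r = ∑' n : ℕ, r ^ n / n.factorial := by
  rw [Real.exp_eq_exp_ℝ, NormedSpace.exp_eq_tsum_div]

lemma aux_exp_nonneg (x : ι → F) (v : ι → ℝ) :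
    0 ≤ ∑ i, ∑ j, v i * v j * Real.exp (inner ℝ (x i) (x j) : ℝ) := by
  have key : (∑' n : ℕ, ∑ i, ∑ j, v i * v j * ((inner ℝ (x i) (x j) : ℝ) ^ n / n.factorial))
      = ∑ i, ∑ j, v i * v j * Real.exp (inner ℝ (x i) (x j) : ℝ) := by
    rw [Summable.tsum_finsetSum (fun i _ =>
      summable_sum fun j _ => ((Real.summable_pow_div_factorial _).mul_left _))]
    refine Finset.sum_congr rfl fun i _ => ?_
    rw [Summable.tsum_finsetSum (fun j _ => ((Real.summable_pow_div_factorial _).mul_left _))]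
    refine Finset.sum_congr rfl fun j _ => ?_
    rw [tsum_mul_left, ← aux_real_exp_tsum]
  rw [← key]
  refine tsum_nonneg fun n => ?_
  have h : ∑ i, ∑ j, v i * v j * ((inner ℝ (x i) (x j) : ℝ) ^ n / n.factorial)
      = (∑ i, ∑ j, v i * v j * (inner ℝ (x i) (x j) : ℝ) ^ n) / n.factorial := by
    rw [Finset.sum_div]
    refine Finset.sum_congr rfl fun i _ => ?_
    rw [Finset.sum_div]
    exact Finset.sum_congr rfl fun j _ => by ring
  rw [h]
  exact div_nonneg (aux_pow_nonneg x n v) (by positivity)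

lemma aux_gauss_nonneg (x : ι → F) {t : ℝ} (ht : 0 ≤ t) (v : ι → ℝ) :
    0 ≤ ∑ i, ∑ j, v i * v j * Real.exp (-(‖x i - x j‖ ^ 2 * t)) := by
  set y : ι → F := fun i => Real.sqrt (2 * t) • x i with hy
  set w : ι → ℝ := fun i => v i * Real.exp (-(t * ‖x i‖ ^ 2)) with hw
  have hinner : ∀ i j, (inner ℝ (y i) (y j) : ℝ) = 2 * t * (inner ℝ (x i) (x j) : ℝ) := by
    intro i j
    rw [hy]
    simp only [real_inner_smul_left, real_inner_smul_right, ← mul_assoc]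
    rw [Real.mul_self_sqrt (by linarith : (0:ℝ) ≤ 2 * t)]
  have key : ∀ i j, v i * v j * Real.exp (-(‖x i - x j‖ ^ 2 * t))
      = w i * w j * Real.exp (inner ℝ (y i) (y j) : ℝ) := by
    intro i j
    rw [hinner]
    have hns : ‖x i - x j‖ ^ 2 = ‖x i‖ ^ 2 - 2 * (inner ℝ (x i) (x j) : ℝ) + ‖x j‖ ^ 2 :=
      norm_sub_sq_real _ _
    have harg : -(‖x i - x j‖ ^ 2 * t)
        = (-(t * ‖x i‖ ^ 2) + -(t * ‖x j‖ ^ 2)) + 2 * t * (inner ℝ (x i) (x j) : ℝ) := by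
      rw [hns]; ring
    rw [harg, Real.exp_add, Real.exp_add, hw]
    ring
  calc (0:ℝ) ≤ ∑ i, ∑ j, w i * w j * Real.exp (inner ℝ (y i) (y j) : ℝ) :=
        aux_exp_nonneg y w
    _ = ∑ i, ∑ j, v i * v j * Real.exp (-(‖x i - x j‖ ^ 2 * t)) :=
        Finset.sum_congr rfl fun i _ => Finset.sum_congr rfl fun j _ => (key i j).symm




noncomputable def auxG (a : ℝ) : ℝ → ℝ := fun t => (1 - Real.exp (-t)) * t ^ (-1 - a)

lemma auxG_contOn (a : ℝ) : ContinuousOn (auxG a) (Ioi 0) := by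
  apply ContinuousOn.mul
  · exact (continuous_const.sub (Real.continuous_exp.comp continuous_neg)).continuousOn
  · exact fun x hx => (Real.continuousAt_rpow_const x _ (Or.inl (ne_of_gt hx))).continuousWithinAt

lemma auxG_nonneg {a : ℝ} {t : ℝ} (ht : 0 < t) : 0 ≤ auxG a t := by
  apply mul_nonneg
  · have : Real.exp (-t) ≤ 1 := Real.exp_le_one_iff.mpr (by linarith)
    linarith
  · exact Real.rpow_nonneg ht.le _

lemma auxG_integrable {a : ℝ} (ha : a ∈ Set.Ioo (0:ℝ) 1) : IntegrableOn (auxG a) (Ioi 0) := by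
  obtain ⟨ha0, ha1⟩ := ha
  have hmeas : AEStronglyMeasurable (auxG a) (volume.restrict (Ioi 0)) :=
    (auxG_contOn a).aestronglyMeasurable measurableSet_Ioi
  have h1 : IntegrableOn (auxG a) (Ioc 0 1) := by
    have hdom : IntegrableOn (fun t : ℝ => t ^ (-a)) (Ioc 0 1) := by
      rw [integrableOn_Ioc_iff_integrableOn_Ioo]
      exact (intervalIntegral.integrableOn_Ioo_rpow_iff one_pos).mpr (by linarith)
    refine Integrable.mono hdom (hmeas.mono_set Ioc_subset_Ioi_self) ?_
    filter_upwards [ae_restrict_mem measurableSet_Ioc] with t ht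
    obtain ⟨ht0, ht1⟩ := ht
    rw [Real.norm_eq_abs, Real.norm_eq_abs, _root_.abs_of_nonneg (auxG_nonneg ht0),
      _root_.abs_of_nonneg (Real.rpow_nonneg ht0.le _)]
    have hb : 1 - Real.exp (-t) ≤ t := by
      have := Real.add_one_le_exp (-t); linarith
    calc (1 - Real.exp (-t)) * t ^ (-1 - a) ≤ t * t ^ (-1 - a) := by
          apply mul_le_mul_of_nonneg_right hb (Real.rpow_nonneg ht0.le _)
      _ = t ^ (-a) := by
          have h : t ^ (-a) = t ^ ((1:ℝ) + (-1 - a)) := by congr 1; ring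
          rw [h, Real.rpow_add ht0, Real.rpow_one]
  have h2 : IntegrableOn (auxG a) (Ioi 1) := by
    have hdom : IntegrableOn (fun t : ℝ => t ^ (-1 - a)) (Ioi 1) :=
      integrableOn_Ioi_rpow_of_lt (by linarith) one_pos
    refine Integrable.mono hdom (hmeas.mono_set (Ioi_subset_Ioi one_pos.le)) ?_
    filter_upwards [ae_restrict_mem measurableSet_Ioi] with t ht
    have ht0 : (0:ℝ) < t := lt_trans one_pos ht
    rw [Real.norm_eq_abs, Real.norm_eq_abs, _root_.abs_of_nonneg (auxG_nonneg ht0),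
      _root_.abs_of_nonneg (Real.rpow_nonneg ht0.le _)]
    have hep : Real.exp (-t) > 0 := Real.exp_pos _
    show (1 - Real.exp (-t)) * t ^ (-1 - a) ≤ t ^ (-1 - a)
    nlinarith [Real.rpow_nonneg ht0.le (-1 - a)]
  have := h1.union h2
  rwa [Ioc_union_Ioi_eq_Ioi one_pos.le] at this

lemma auxPhi_pos {a : ℝ} (ha : a ∈ Set.Ioo (0:ℝ) 1) : 0 < ∫ t in Ioi 0, auxG a t := by
  rw [setIntegral_pos_iff_support_of_nonneg_ae ?_ (auxG_integrable ha)]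
  · have hsub : Set.Ioi (0:ℝ) ⊆ Function.support (auxG a) ∩ Set.Ioi 0 := by
      intro t ht
      refine ⟨?_, ht⟩
      have h1 : Real.exp (-t) < 1 := Real.exp_lt_one_iff.mpr (by simpa using ht)
      have h2 : (0:ℝ) < t ^ (-1 - a) := Real.rpow_pos_of_pos ht _
      exact ne_of_gt (mul_pos (by linarith) h2)
    calc (0:ENNReal) < volume (Set.Ioi (0:ℝ)) := by simp [Real.volume_Ioi]
      _ ≤ volume (Function.support (auxG a) ∩ Set.Ioi 0) := measure_mono hsub
  · filter_upwards [ae_restrict_mem measurableSet_Ioi] with t ht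
    exact auxG_nonneg ht




lemma auxRep_integrable {a : ℝ} (ha : a ∈ Set.Ioo (0:ℝ) 1) {r : ℝ} (hr : 0 ≤ r) :
    IntegrableOn (fun t => (1 - Real.exp (-(r ^ 2 * t))) * t ^ (-1 - a)) (Set.Ioi 0) ∧
    ∫ t in Set.Ioi 0, (1 - Real.exp (-(r ^ 2 * t))) * t ^ (-1 - a)
      = r ^ (2 * a) * ∫ t in Set.Ioi 0, auxG a t := by
  rcases eq_or_lt_of_le hr with h0 | hrpos
  · have hz : (fun t : ℝ => (1 - Real.exp (-(r ^ 2 * t))) * t ^ (-1 - a)) = fun _ => (0:ℝ) := by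
      funext t; rw [← h0]; norm_num
    constructor
    · rw [hz]; exact integrableOn_zero
    · rw [hz, ← h0]
      have h2a : (2:ℝ) * a ≠ 0 := by
        have := ha.1; positivity
      simp [Real.zero_rpow h2a]
  · set c : ℝ := r ^ 2 with hcdef
    have hc : 0 < c := by positivity
    have heq : Set.EqOn (fun t : ℝ => c ^ ((1:ℝ) + a) * auxG a (c * t))
        (fun t => (1 - Real.exp (-(c * t))) * t ^ (-1 - a)) (Set.Ioi 0) := by
      intro t ht
      have ht0 : (0:ℝ) < t := ht
      simp only [auxG]
      rw [Real.mul_rpow hc.le ht0.le]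
      have h0 : c ^ ((1:ℝ) + a) * c ^ (-1 - a) = 1 := by
        rw [← Real.rpow_add hc]
        have : (1:ℝ) + a + (-1 - a) = 0 := by ring
        rw [this, Real.rpow_zero]
      calc c ^ ((1:ℝ) + a) * ((1 - Real.exp (-(c * t))) * (c ^ (-1 - a) * t ^ (-1 - a)))
          = (c ^ ((1:ℝ) + a) * c ^ (-1 - a)) * ((1 - Real.exp (-(c * t))) * t ^ (-1 - a)) := by
            ring
        _ = (1 - Real.exp (-(c * t))) * t ^ (-1 - a) := by rw [h0, one_mul]
    have hcomp : IntegrableOn (fun t : ℝ => auxG a (c * t)) (Set.Ioi 0) := by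
      have := (integrableOn_Ioi_comp_mul_left_iff (auxG a) 0 hc).mpr
        (by rw [mul_zero]; exact auxG_integrable ha)
      exact this
    have hint : IntegrableOn (fun t : ℝ => c ^ ((1:ℝ) + a) * auxG a (c * t)) (Set.Ioi 0) :=
      hcomp.const_mul _
    constructor
    · exact (hint.congr_fun heq measurableSet_Ioi)
    · rw [← setIntegral_congr_fun measurableSet_Ioi heq]
      rw [MeasureTheory.integral_const_mul]
      have hsub : ∫ t in Set.Ioi (0:ℝ), auxG a (c * t)
          = c⁻¹ * ∫ t in Set.Ioi (0:ℝ), auxG a t := by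
        have := integral_comp_mul_left_Ioi (auxG a) 0 hc
        rw [mul_zero] at this
        simpa [smul_eq_mul] using this
      rw [hsub]
      have hpow : c ^ ((1:ℝ) + a) * c⁻¹ = r ^ (2 * a) := by
        rw [← Real.rpow_neg_one c, ← Real.rpow_add hc]
        have h1 : (1:ℝ) + a + (-1) = a := by ring
        rw [h1, hcdef, ← Real.rpow_natCast r 2]
        rw [← Real.rpow_mul hr]
        norm_num
      rw [← mul_assoc, hpow]






lemma aux_negdef {a : ℝ} (ha : a ∈ Set.Ioo (0:ℝ) 1) (x : ι → F) (v : ι → ℝ)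
    (hv : ∑ i, v i = 0) :
    ∑ i, ∑ j, v i * v j * ‖x i - x j‖ ^ (2 * a) ≤ 0 := by
  classical
  set φ : ℝ := ∫ t in Set.Ioi 0, auxG a t with hφdef
  have hφ : 0 < φ := auxPhi_pos ha
  set f : ι → ι → ℝ → ℝ :=
    fun i j t => v i * v j * ((1 - Real.exp (-(‖x i - x j‖ ^ 2 * t))) * t ^ (-1 - a)) with hfdef
  have hfint : ∀ i j, IntegrableOn (f i j) (Set.Ioi 0) := fun i j =>
    ((auxRep_integrable ha (norm_nonneg (x i - x j))).1.const_mul _)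
  have hterm : ∀ i j, v i * v j * ‖x i - x j‖ ^ (2 * a)
      = φ⁻¹ * ∫ t in Set.Ioi 0, f i j t := by
    intro i j
    have h2 := (auxRep_integrable ha (norm_nonneg (x i - x j))).2
    have : ∫ t in Set.Ioi 0, f i j t
        = v i * v j * (‖x i - x j‖ ^ (2 * a) * φ) := by
      rw [hfdef]
      simp only
      rw [MeasureTheory.integral_const_mul, h2, hφdef]
    rw [this]
    field_simp
  have hsum : ∑ i, ∑ j, v i * v j * ‖x i - x j‖ ^ (2 * a)
      = φ⁻¹ * ∫ t in Set.Ioi 0, ∑ i, ∑ j, f i j t := by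
    rw [MeasureTheory.integral_finset_sum _ (fun i _ => integrable_finset_sum _
      (fun j _ => hfint i j))]
    rw [Finset.mul_sum]
    refine Finset.sum_congr rfl fun i _ => ?_
    rw [MeasureTheory.integral_finset_sum _ (fun j _ => hfint i j), Finset.mul_sum]
    exact Finset.sum_congr rfl fun j _ => hterm i j
  rw [hsum]
  have hint_nonpos : (∫ t in Set.Ioi 0, ∑ i, ∑ j, f i j t) ≤ 0 := by
    apply MeasureTheory.integral_nonpos_of_ae
    filter_upwards [ae_restrict_mem measurableSet_Ioi] with t ht
    have ht0 : (0:ℝ) < t := ht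
    simp only [Pi.zero_apply]
    have hsplit : ∑ i, ∑ j, f i j t
        = ((∑ i, v i) * (∑ j, v j)) * t ^ (-1 - a)
          - (∑ i, ∑ j, v i * v j * Real.exp (-(‖x i - x j‖ ^ 2 * t))) * t ^ (-1 - a) := by
      rw [Finset.sum_mul, Finset.sum_mul, Finset.sum_mul, ← Finset.sum_sub_distrib]
      refine Finset.sum_congr rfl fun i _ => ?_
      rw [Finset.mul_sum, Finset.sum_mul, Finset.sum_mul, ← Finset.sum_sub_distrib]
      refine Finset.sum_congr rfl fun j _ => ?_
      simp only [hfdef]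
      ring
    rw [hsplit, hv]
    have h1 : 0 ≤ (∑ i, ∑ j, v i * v j * Real.exp (-(‖x i - x j‖ ^ 2 * t))) :=
      aux_gauss_nonneg x ht0.le v
    have h2 : (0:ℝ) ≤ t ^ (-1 - a) := Real.rpow_nonneg ht0.le _
    nlinarith [mul_nonneg h1 h2]
  exact mul_nonpos_of_nonneg_of_nonpos (inv_nonneg.mpr hφ.le) hint_nonpos






lemma aux_key {N : ℕ} {a : ℝ} (ha : a ∈ Set.Ioo (0:ℝ) 1) (x : Fin N → F) (v : Fin N → ℝ) :
    0 ≤ ∑ i, ∑ j, v i * v j *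
      (‖x i‖ ^ (2 * a) + ‖x j‖ ^ (2 * a) - ‖x i - x j‖ ^ (2 * a)) := by
  classical
  set y : Option (Fin N) → F := fun o => o.elim 0 x with hy
  obtain ⟨c0, hc0⟩ : ∃ c0 : ℝ, c0 = -∑ i, v i := ⟨_, rfl⟩
  set w : Option (Fin N) → ℝ := fun o => o.elim c0 v with hw
  have hw0 : ∑ o, w o = 0 := by
    rw [Fintype.sum_option]; simp [hw, hc0]
  have hneg := aux_negdef ha y w hw0
  have h2a : (2:ℝ) * a ≠ 0 := by have := ha.1; positivity
  have hzero : ‖(0:F)‖ ^ (2 * a) = 0 := by rw [norm_zero, Real.zero_rpow h2a]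
  set s : ℝ := ∑ i, v i with hs
  set T : ℝ := ∑ i, v i * ‖x i‖ ^ (2 * a) with hT
  set D : ℝ := ∑ i, ∑ j, v i * v j * ‖x i - x j‖ ^ (2 * a) with hD
  have hexp : ∑ o, ∑ o', w o * w o' * ‖y o - y o'‖ ^ (2 * a) = D + c0 * T + T * c0 := by
    rw [Fintype.sum_option (f := fun o => ∑ o', w o * w o' * ‖y o - y o'‖ ^ (2 * a))]
    rw [Fintype.sum_option (f := fun o' => w none * w o' * ‖y none - y o'‖ ^ (2 * a))]
    rw [show (∑ i, ∑ o', w (some i) * w o' * ‖y (some i) - y o'‖ ^ (2 * a))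
        = ∑ i, (w (some i) * w none * ‖y (some i) - y none‖ ^ (2 * a)
            + ∑ j, w (some i) * w (some j) * ‖y (some i) - y (some j)‖ ^ (2 * a)) from
      Finset.sum_congr rfl fun i _ => Fintype.sum_option _]
    simp only [hy, hw, Option.elim_none, Option.elim_some, sub_zero, zero_sub, norm_neg,
      sub_self, hzero, mul_zero]
    rw [Finset.sum_add_distrib]
    have h1 : ∑ j, c0 * v j * ‖x j‖ ^ (2 * a) = c0 * T := by
      rw [hT, Finset.mul_sum]
      exact Finset.sum_congr rfl fun j _ => by ring
    have h2 : ∑ i, v i * c0 * ‖x i‖ ^ (2 * a) = T * c0 := by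
      rw [hT, Finset.sum_mul]
      exact Finset.sum_congr rfl fun j _ => by ring
    rw [h1, h2, hD]
    ring
  have hrow : ∀ i, ∑ j, v i * v j *
      (‖x i‖ ^ (2 * a) + ‖x j‖ ^ (2 * a) - ‖x i - x j‖ ^ (2 * a))
      = v i * ‖x i‖ ^ (2 * a) * s + v i * T - ∑ j, v i * v j * ‖x i - x j‖ ^ (2 * a) := by
    intro i
    simp only [mul_add, mul_sub]
    rw [Finset.sum_sub_distrib, Finset.sum_add_distrib]
    congr 1
    congr 1
    · rw [Finset.mul_sum]
      exact Finset.sum_congr rfl fun j _ => by ring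
    · rw [hT, Finset.mul_sum]
      exact Finset.sum_congr rfl fun j _ => by ring
  have hgoal : ∑ i, ∑ j, v i * v j *
      (‖x i‖ ^ (2 * a) + ‖x j‖ ^ (2 * a) - ‖x i - x j‖ ^ (2 * a))
      = T * s + s * T - D := by
    rw [Finset.sum_congr rfl fun i _ => hrow i]
    rw [Finset.sum_sub_distrib, Finset.sum_add_distrib, ← hD]
    have e1 : ∑ i, v i * ‖x i‖ ^ (2 * a) * s = T * s := by rw [hT, Finset.sum_mul]
    have e2 : ∑ i : Fin N, v i * T = s * T := by rw [hs, Finset.sum_mul]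
    rw [e1, e2]
  rw [hgoal]
  rw [hexp] at hneg
  have hc0' : c0 = -s := by rw [hc0, hs]
  rw [hc0'] at hneg
  linarith





end AuxFBM

theorem fbm_kernel_positive_definite {H : Type*} [NormedAddCommGroup H]
    [InnerProductSpace ℂ H] [CompleteSpace H] (a : ℝ) (ha : a ∈ Set.Ioo (0 : ℝ) 1) :
    IsPositiveDefiniteKernelR
      (fun x y : H => ‖x‖ ^ (2 * a) + ‖y‖ ^ (2 * a) - ‖x - y‖ ^ (2 * a)) := by
  letI : InnerProductSpace ℝ H := InnerProductSpace.complexToReal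
  intro N x c
  set k : Fin N → Fin N → ℝ :=
    fun i j => ‖x i‖ ^ (2 * a) + ‖x j‖ ^ (2 * a) - ‖x i - x j‖ ^ (2 * a) with hk
  have hsymm : ∀ i j, k i j = k j i := by
    intro i j; rw [hk]; simp only [norm_sub_rev (x i) (x j)]; ring
  have hre_term : ∀ i j, ((starRingEnd ℂ) (c i) * ((k i j : ℝ) : ℂ) * c j).re
      = k i j * ((c i).re * (c j).re + (c i).im * (c j).im) := by
    intro i j
    simp [Complex.mul_re, Complex.mul_im]
    ring
  have him_term : ∀ i j, ((starRingEnd ℂ) (c i) * ((k i j : ℝ) : ℂ) * c j).im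
      = k i j * ((c i).re * (c j).im - (c i).im * (c j).re) := by
    intro i j
    simp [Complex.mul_re, Complex.mul_im]
    ring
  constructor
  · show (∑ j, ∑ i, (starRingEnd ℂ) (c i) * ((k i j : ℝ) : ℂ) * c j).im = 0
    rw [Complex.im_sum]
    have h1 : ∑ j, (∑ i, (starRingEnd ℂ) (c i) * ((k i j : ℝ) : ℂ) * c j).im
        = ∑ j, ∑ i, k i j * ((c i).re * (c j).im - (c i).im * (c j).re) := by
      refine Finset.sum_congr rfl fun j _ => ?_
      rw [Complex.im_sum]
      exact Finset.sum_congr rfl fun i _ => him_term i j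
    rw [h1]
    have h2 : (∑ j, ∑ i, k i j * ((c i).re * (c j).im - (c i).im * (c j).re))
        = -(∑ j, ∑ i, k i j * ((c i).re * (c j).im - (c i).im * (c j).re)) := by
      conv_lhs => rw [Finset.sum_comm]
      rw [← Finset.sum_neg_distrib]
      refine Finset.sum_congr rfl fun i _ => ?_
      rw [← Finset.sum_neg_distrib]
      refine Finset.sum_congr rfl fun j _ => ?_
      rw [hsymm i j]
      ring
    linarith
  · show 0 ≤ (∑ j, ∑ i, (starRingEnd ℂ) (c i) * ((k i j : ℝ) : ℂ) * c j).re
    rw [Complex.re_sum]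
    have h1 : ∑ j, (∑ i, (starRingEnd ℂ) (c i) * ((k i j : ℝ) : ℂ) * c j).re
        = ∑ j, ∑ i, k i j * ((c i).re * (c j).re + (c i).im * (c j).im) := by
      refine Finset.sum_congr rfl fun j _ => ?_
      rw [Complex.re_sum]
      exact Finset.sum_congr rfl fun i _ => hre_term i j
    rw [h1]
    have h2 : (∑ j, ∑ i, k i j * ((c i).re * (c j).re + (c i).im * (c j).im))
        = (∑ i, ∑ j, (fun m => (c m).re) i * (fun m => (c m).re) j * k i j)
          + (∑ i, ∑ j, (fun m => (c m).im) i * (fun m => (c m).im) j * k i j) := by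
      rw [Finset.sum_comm, ← Finset.sum_add_distrib]
      refine Finset.sum_congr rfl fun i _ => ?_
      rw [← Finset.sum_add_distrib]
      exact Finset.sum_congr rfl fun j _ => by ring
    rw [h2]
    have hK1 := aux_key ha x (fun m => (c m).re)
    have hK2 := aux_key ha x (fun m => (c m).im)
    rw [hk]
    exact add_nonneg hK1 hK2
end

section
/- Let X be a set and let d : X × X → ℝ be a symmetric kernel with d(x,y) ≥ 0 for all x,y. Then d is negative definite if and only if for every t > 0 the kernel (x,y) ↦ 1/(1 + t·d(x,y)) is positive definite on X. -/
open Complex Finset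

/-- A kernel `k : X → X → ℂ` is positive definite if every finite quadratic form
`∑_{j,i} conj (c i) * k (x i) (x j) * c j` is a nonnegative real number. -/
def IsPositiveDefiniteKernel {X : Type*} (k : X → X → ℂ) : Prop :=
  ∀ (N : ℕ) (x : Fin N → X) (c : Fin N → ℂ),
    (∑ j, ∑ i, (starRingEnd ℂ) (c i) * k (x i) (x j) * c j).im = 0 ∧
    0 ≤ (∑ j, ∑ i, (starRingEnd ℂ) (c i) * k (x i) (x j) * c j).re

/-- A real symmetric kernel `d : X → X → ℝ` is negative definite if every finite quadratic
form `∑_{j,i} conj (c i) * d (x i) (x j) * c j` with complex coefficients summing to zero is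
a real number `≤ 0`. -/
def IsNegativeDefiniteKernelR {X : Type*} (d : X → X → ℝ) : Prop :=
  ∀ (N : ℕ) (x : Fin N → X) (c : Fin N → ℂ), (∑ j, c j) = 0 →
    (∑ j, ∑ i, (starRingEnd ℂ) (c i) * (d (x i) (x j) : ℂ) * c j).im = 0 ∧
    (∑ j, ∑ i, (starRingEnd ℂ) (c i) * (d (x i) (x j) : ℂ) * c j).re ≤ 0

namespace SchAux

variable {X : Type*}

/-- Real negative definiteness. -/
def RND (d : X → X → ℝ) : Prop :=
  ∀ (N : ℕ) (x : Fin N → X) (c : Fin N → ℝ), (∑ j, c j) = 0 →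
    ∑ j, ∑ i, c i * c j * d (x i) (x j) ≤ 0

def RPD (k : X → X → ℝ) : Prop :=
  ∀ (N : ℕ) (x : Fin N → X) (c : Fin N → ℝ),
    0 ≤ ∑ j, ∑ i, c i * c j * k (x i) (x j)

lemma RPD.add {k l : X → X → ℝ} (hk : RPD k) (hl : RPD l) :
    RPD (fun x y => k x y + l x y) := by
  intro N x c
  have h1 := hk N x c; have h2 := hl N x c
  have : ∑ j, ∑ i, c i * c j * (k (x i) (x j) + l (x i) (x j))
      = (∑ j, ∑ i, c i * c j * k (x i) (x j))
        + ∑ j, ∑ i, c i * c j * l (x i) (x j) := by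
    rw [← Finset.sum_add_distrib]
    refine Finset.sum_congr rfl fun j _ => ?_
    rw [← Finset.sum_add_distrib]
    exact Finset.sum_congr rfl fun i _ => by ring
  rw [this]; linarith

lemma RPD.smul {k : X → X → ℝ} (hk : RPD k) {t : ℝ} (ht : 0 ≤ t) :
    RPD (fun x y => t * k x y) := by
  intro N x c
  have h1 := hk N x c
  have : ∑ j, ∑ i, c i * c j * (t * k (x i) (x j))
      = t * ∑ j, ∑ i, c i * c j * k (x i) (x j) := by
    rw [Finset.mul_sum]
    refine Finset.sum_congr rfl fun j _ => ?_
    rw [Finset.mul_sum]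
    exact Finset.sum_congr rfl fun i _ => by ring
  rw [this]; exact mul_nonneg ht h1

lemma double_sum_mul {N : ℕ} (f g : Fin N → ℝ) :
    ∑ j, ∑ i, f i * g j = (∑ i, f i) * (∑ j, g j) := by
  rw [Finset.sum_mul_sum]
  rw [Finset.sum_comm]

lemma RPD.rankOne (f : X → ℝ) : RPD (fun x y => f x * f y) := by
  intro N x c
  have : ∑ j, ∑ i, c i * c j * (f (x i) * f (x j))
      = (∑ i, c i * f (x i)) * (∑ j, c j * f (x j)) := by
    rw [← double_sum_mul]
    exact Finset.sum_congr rfl fun j _ => Finset.sum_congr rfl fun i _ => by ring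
  rw [this]; exact mul_self_nonneg _

lemma RPD.const {r : ℝ} (hr : 0 ≤ r) : RPD (fun _ _ : X => r) := by
  have h := RPD.rankOne (X := X) (fun _ => Real.sqrt r)
  simpa [Real.mul_self_sqrt hr] using h

/-- Schur product theorem for kernels; `l` symmetric. -/
lemma RPD.mul {k l : X → X → ℝ} (hk : RPD k) (hl : RPD l)
    (hls : ∀ x y, l y x = l x y) :
    RPD (fun x y => k x y * l x y) := by
  intro N x c
  simp only []
  classical
  set B : Matrix (Fin N) (Fin N) ℝ := Matrix.of fun i j => l (x i) (x j) with hBdef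
  have hB : B.PosSemidef := by
    refine Matrix.posSemidef_iff_dotProduct_mulVec.mpr ⟨?_, ?_⟩
    · ext i j
      simp [Matrix.conjTranspose, B, hls (x i) (x j)]
    · intro v
      have := hl N x v
      simp only [dotProduct, Matrix.mulVec, dotProduct, star, B]
      refine this.trans_eq (Eq.symm ?_)
      rw [Finset.sum_comm]
      refine Finset.sum_congr rfl fun i _ => ?_
      rw [Finset.mul_sum]
      refine Finset.sum_congr rfl fun j _ => ?_
      simp [Matrix.of_apply]
      ring
  obtain ⟨C, hC⟩ : ∃ C : Matrix (Fin N) (Fin N) ℝ, B = C.conjTranspose * C := by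
    open scoped MatrixOrder Matrix.Norms.L2Operator in
    exact CStarAlgebra.nonneg_iff_eq_star_mul_self.mp hB.nonneg
  have key : ∀ i j, l (x i) (x j) = ∑ m, C m i * C m j := by
    intro i j
    have : B i j = (C.conjTranspose * C) i j := by rw [hC]
    simpa [Matrix.mul_apply, Matrix.conjTranspose_apply, B] using this
  have expand : ∑ j, ∑ i, c i * c j * (k (x i) (x j) * l (x i) (x j))
      = ∑ m, ∑ j, ∑ i, (fun i => c i * C m i) i * (fun i => c i * C m i) j * k (x i) (x j) :=
    calc ∑ j, ∑ i, c i * c j * (k (x i) (x j) * l (x i) (x j))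
        = ∑ j, ∑ i, ∑ m, (c i * C m i) * (c j * C m j) * k (x i) (x j) := by
          refine Finset.sum_congr rfl fun j _ => Finset.sum_congr rfl fun i _ => ?_
          rw [key i j, Finset.mul_sum, Finset.mul_sum]
          exact Finset.sum_congr rfl fun m _ => by ring
      _ = ∑ j, ∑ m, ∑ i, (c i * C m i) * (c j * C m j) * k (x i) (x j) :=
          Finset.sum_congr rfl fun j _ => Finset.sum_comm
      _ = ∑ m, ∑ j, ∑ i, (c i * C m i) * (c j * C m j) * k (x i) (x j) := Finset.sum_comm
  rw [expand]
  exact Finset.sum_nonneg fun m _ => hk N x fun i => c i * C m i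


lemma RPD.pow {k : X → X → ℝ} (hk : RPD k) (hks : ∀ x y, k y x = k x y) (n : ℕ) :
    RPD (fun x y => k x y ^ n) := by
  induction n with
  | zero => simpa using RPD.const (X := X) (r := 1) zero_le_one
  | succ n ih =>
      have := ih.mul hk hks
      have he : (fun x y => k x y ^ n * k x y) = fun x y => k x y ^ (n + 1) := by
        funext x y; rw [pow_succ]
      rwa [he] at this

lemma RPD.of_tendsto {k : X → X → ℝ} {ks : ℕ → X → X → ℝ}
    (h : ∀ n, RPD (ks n))
    (hlim : ∀ x y, Filter.Tendsto (fun n => ks n x y) Filter.atTop (nhds (k x y))) :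
    RPD k := by
  intro N x c
  have htend : Filter.Tendsto
      (fun n => ∑ j, ∑ i, c i * c j * ks n (x i) (x j)) Filter.atTop
      (nhds (∑ j, ∑ i, c i * c j * k (x i) (x j))) := by
    refine tendsto_finset_sum _ fun j _ => ?_
    refine tendsto_finset_sum _ fun i _ => ?_
    exact Filter.Tendsto.const_mul _ (hlim (x i) (x j))
  exact ge_of_tendsto' htend fun n => h n N x c

lemma RPD.exp {k : X → X → ℝ} (hk : RPD k) (hks : ∀ x y, k y x = k x y) :
    RPD (fun x y => Real.exp (k x y)) := by
  refine RPD.of_tendsto (ks := fun n x y => (1 + k x y / n) ^ n) (fun n => ?_) ?_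
  · have hbase : RPD (fun x y => 1 + k x y / n) := by
      have h1 := RPD.const (X := X) (r := 1) zero_le_one
      have h2 := hk.smul (t := ((n : ℝ))⁻¹) (by positivity)
      have := h1.add h2
      have he : (fun x y : X => 1 + ((n:ℝ))⁻¹ * k x y) = fun x y => 1 + k x y / n := by
        funext x y; rw [div_eq_inv_mul]
      rwa [he] at this
    exact hbase.pow (fun x y => by simp [hks x y]) n
  · intro x y
    exact Real.tendsto_one_add_div_pow_exp (k x y)

lemma double_sum_mul' {N : ℕ} (f g : Fin N → ℝ) :
    ∑ j, ∑ i, f i * g j = (∑ i, f i) * (∑ j, g j) := by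
  rw [Finset.sum_mul_sum, Finset.sum_comm]

lemma RND.phi_rpd {d : X → X → ℝ} (hd : RND d)
    (hsymm : ∀ x y, d y x = d x y) (x₀ : X) :
    RPD (fun x y => d x x₀ + d y x₀ - d x y - d x₀ x₀) := by
  intro N x c
  simp only []
  set s := ∑ j, c j with hs
  set A := ∑ j, ∑ i, c i * c j * d (x i) (x j) with hA
  set u := ∑ i, c i * d (x i) x₀ with hu
  set e := d x₀ x₀ with he
  set c' : Fin (N+1) → ℝ := Fin.snoc c (-s) with hc'
  set x' : Fin (N+1) → X := Fin.snoc x x₀ with hx'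
  have hsum : ∑ j, c' j = (0:ℝ) := by
    rw [Fin.sum_univ_castSucc]
    simp [hc', hs]
  have hT := hd (N+1) x' c' hsum
  have hTexp : ∑ j, ∑ i, c' i * c' j * d (x' i) (x' j)
      = A - s*u - s*u + s*(s*e) := by
    rw [Fin.sum_univ_castSucc]
    have inner : ∀ g : Fin (N+1) → ℝ, True := fun _ => trivial
    calc (∑ j : Fin N, ∑ i : Fin (N+1), c' i * c' j.castSucc * d (x' i) (x' j.castSucc))
          + ∑ i : Fin (N+1), c' i * c' (Fin.last N) * d (x' i) (x' (Fin.last N))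
        = (∑ j : Fin N, ((∑ i : Fin N, c i * c j * d (x i) (x j))
            + (-s) * c j * d x₀ (x j)))
          + ((∑ i : Fin N, c i * (-s) * d (x i) x₀) + (-s) * (-s) * e) := by
          congr 1
          · refine Finset.sum_congr rfl fun j _ => ?_
            rw [Fin.sum_univ_castSucc]
            simp [hc', hx']
          · rw [Fin.sum_univ_castSucc]
            simp [hc', hx']
            exact Or.inl rfl
      _ = A - s*u - s*u + s*(s*e) := by
          rw [Finset.sum_add_distrib]
          have h1 : ∑ j : Fin N, (-s) * c j * d x₀ (x j) = -(s*u) := by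
            calc ∑ j : Fin N, (-s) * c j * d x₀ (x j)
                = ∑ j : Fin N, -(s * (c j * d (x j) x₀)) :=
                  Finset.sum_congr rfl fun j _ => by rw [hsymm x₀ (x j)]; ring
              _ = -(s*u) := by rw [Finset.sum_neg_distrib, hu, Finset.mul_sum]
          have h2 : ∑ i : Fin N, c i * (-s) * d (x i) x₀ = -(s*u) := by
            calc ∑ i : Fin N, c i * (-s) * d (x i) x₀
                = ∑ i : Fin N, -(s * (c i * d (x i) x₀)) :=
                  Finset.sum_congr rfl fun i _ => by ring
              _ = -(s*u) := by rw [Finset.sum_neg_distrib, hu, Finset.mul_sum]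
          rw [h1, h2, hA]
          ring
  rw [hTexp] at hT
  have expand : ∑ j, ∑ i, c i * c j * (d (x i) x₀ + d (x j) x₀ - d (x i) (x j) - e)
      = u*s + s*u - A - s*(s*e) := by
    calc ∑ j, ∑ i, c i * c j * (d (x i) x₀ + d (x j) x₀ - d (x i) (x j) - e)
        = ∑ j, ∑ i, ((c i * d (x i) x₀) * c j + c i * (c j * d (x j) x₀)
            - c i * c j * d (x i) (x j) - c i * (c j * e)) :=
          Finset.sum_congr rfl fun j _ => Finset.sum_congr rfl fun i _ => by ring
      _ = (∑ j, ∑ i, (c i * d (x i) x₀) * c j) + (∑ j, ∑ i, c i * (c j * d (x j) x₀))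
            - (∑ j, ∑ i, c i * c j * d (x i) (x j)) - ∑ j, ∑ i, c i * (c j * e) := by
          simp only [Finset.sum_add_distrib, Finset.sum_sub_distrib]
      _ = u*s + s*u - A - s*(s*e) := by
          rw [double_sum_mul' (fun i => c i * d (x i) x₀) c,
            double_sum_mul' c (fun j => c j * d (x j) x₀), ← hA,
            double_sum_mul' c (fun j => c j * e), ← Finset.sum_mul, ← hs, ← hu]
  rw [expand]
  linarith

lemma RND.exp_rpd {d : X → X → ℝ} (hd : RND d)
    (hsymm : ∀ x y, d y x = d x y) {t : ℝ} (ht : 0 < t) :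
    RPD (fun x y => Real.exp (-(t * d x y))) := by
  by_cases hX : Nonempty X
  · obtain ⟨x₀⟩ := hX
    have hphi : RPD (fun x y : X => t * (d x x₀ + d y x₀ - d x y - d x₀ x₀)) :=
      (hd.phi_rpd hsymm x₀).smul ht.le
    have hphisymm : ∀ x y : X, t * (d y x₀ + d x x₀ - d y x - d x₀ x₀)
        = t * (d x x₀ + d y x₀ - d x y - d x₀ x₀) := fun x y => by
      rw [hsymm x y]; ring
    have hexp : RPD (fun x y : X =>
        Real.exp (t * (d x x₀ + d y x₀ - d x y - d x₀ x₀))) :=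
      hphi.exp hphisymm
    set f : X → ℝ := fun z => Real.exp (-(t * d z x₀) + t * d x₀ x₀ / 2) with hf
    have hprod := hexp.mul (RPD.rankOne f) (fun x y => mul_comm _ _)
    have heq : (fun x y : X => Real.exp (t * (d x x₀ + d y x₀ - d x y - d x₀ x₀))
        * (f x * f y)) = fun x y : X => Real.exp (-(t * d x y)) := by
      funext x y
      rw [hf]
      simp only []
      rw [← Real.exp_add, ← Real.exp_add]
      congr 1
      ring
    rwa [heq] at hprod
  · intro N x c
    match N with
    | 0 => simp
    | (n+1) => exact absurd ⟨x 0⟩ hX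

lemma laplace (b : ℝ) (hb : 0 < b) :
    (∫ s in Set.Ioi (0:ℝ), Real.exp (-(b * s))) = 1 / b := by
  have := MeasureTheory.integral_comp_mul_left_Ioi (fun u => Real.exp (-u)) 0 hb
  simp only [mul_zero] at this
  rw [show (fun s => Real.exp (-(b * s))) = fun s => (fun u => Real.exp (-u)) (b * s) from rfl,
    this, integral_exp_neg_Ioi]
  simp [one_div]

lemma RND.resolvent {d : X → X → ℝ} (hd : RND d)
    (hsymm : ∀ x y, d y x = d x y) (hnonneg : ∀ x y, 0 ≤ d x y)
    {t : ℝ} (ht : 0 < t) :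
    RPD (fun x y => 1 / (1 + t * d x y)) := by
  intro N x c
  simp only []
  have hpos : ∀ i j : Fin N, 0 < 1 + t * d (x i) (x j) := fun i j =>
    add_pos_of_pos_of_nonneg one_pos (mul_nonneg ht.le (hnonneg _ _))
  have hint : ∀ i j : Fin N,
      MeasureTheory.IntegrableOn
        (fun s => c i * c j * Real.exp (-((1 + t * d (x i) (x j)) * s)))
        (Set.Ioi (0:ℝ)) := by
    intro i j
    have := (exp_neg_integrableOn_Ioi 0 (hpos i j)).const_mul (c i * c j)
    simp only [neg_mul] at this
    exact this
  have step1 : ∑ j, ∑ i, c i * c j * (1 / (1 + t * d (x i) (x j)))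
      = ∫ s in Set.Ioi (0:ℝ),
          ∑ j, ∑ i, c i * c j * Real.exp (-((1 + t * d (x i) (x j)) * s)) := by
    rw [MeasureTheory.integral_finset_sum _ fun j _ =>
      MeasureTheory.integrable_finset_sum _ fun i _ => hint i j]
    refine Finset.sum_congr rfl fun j _ => ?_
    rw [MeasureTheory.integral_finset_sum _ fun i _ => hint i j]
    refine Finset.sum_congr rfl fun i _ => ?_
    rw [MeasureTheory.integral_const_mul, laplace _ (hpos i j)]
  rw [step1]
  refine MeasureTheory.setIntegral_nonneg measurableSet_Ioi fun s hs => ?_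
  have hst : 0 < s * t := mul_pos hs ht
  have hrpd := hd.exp_rpd hsymm hst N x c
  simp only [] at hrpd
  have hre : ∑ j, ∑ i, c i * c j * Real.exp (-((1 + t * d (x i) (x j)) * s))
      = Real.exp (-s) * ∑ j, ∑ i, c i * c j * Real.exp (-(s * t * d (x i) (x j))) := by
    rw [Finset.mul_sum]
    refine Finset.sum_congr rfl fun j _ => ?_
    rw [Finset.mul_sum]
    refine Finset.sum_congr rfl fun i _ => ?_
    rw [show -((1 + t * d (x i) (x j)) * s) = (-s) + -(s * t * d (x i) (x j)) by ring,
      Real.exp_add]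
    ring
  rw [hre]
  exact mul_nonneg (Real.exp_nonneg _) hrpd

lemma term_re (r : ℝ) (a b : ℂ) :
    ((starRingEnd ℂ) a * (r : ℂ) * b).re = a.re * b.re * r + a.im * b.im * r := by
  simp [Complex.mul_re, Complex.mul_im]
  ring

lemma term_im (r : ℝ) (a b : ℂ) :
    ((starRingEnd ℂ) a * (r : ℂ) * b).im = a.re * b.im * r - a.im * b.re * r := by
  simp [Complex.mul_re, Complex.mul_im]
  ring

variable {k : X → X → ℝ}

lemma quad_re {N : ℕ} (x : Fin N → X) (c : Fin N → ℂ) :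
    (∑ j, ∑ i, (starRingEnd ℂ) (c i) * (k (x i) (x j) : ℂ) * c j).re
      = (∑ j, ∑ i, (c i).re * (c j).re * k (x i) (x j))
        + ∑ j, ∑ i, (c i).im * (c j).im * k (x i) (x j) := by
  rw [Complex.re_sum, ← Finset.sum_add_distrib]
  refine Finset.sum_congr rfl fun j _ => ?_
  rw [Complex.re_sum, ← Finset.sum_add_distrib]
  exact Finset.sum_congr rfl fun i _ => term_re _ _ _

lemma quad_im (hsymm : ∀ x y, k y x = k x y) {N : ℕ} (x : Fin N → X) (c : Fin N → ℂ) :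
    (∑ j, ∑ i, (starRingEnd ℂ) (c i) * (k (x i) (x j) : ℂ) * c j).im = 0 := by
  have hexp : (∑ j, ∑ i, (starRingEnd ℂ) (c i) * (k (x i) (x j) : ℂ) * c j).im
      = ∑ j, ∑ i, ((c i).re * (c j).im * k (x i) (x j)
          - (c i).im * (c j).re * k (x i) (x j)) := by
    rw [Complex.im_sum]
    refine Finset.sum_congr rfl fun j _ => ?_
    rw [Complex.im_sum]
    exact Finset.sum_congr rfl fun i _ => term_im _ _ _
  rw [hexp]
  have hswap : ∑ j, ∑ i, ((c i).re * (c j).im * k (x i) (x j)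
          - (c i).im * (c j).re * k (x i) (x j))
      = ∑ j, ∑ i, -(((c i).re * (c j).im * k (x i) (x j)
          - (c i).im * (c j).re * k (x i) (x j))) := by
    calc ∑ j, ∑ i, ((c i).re * (c j).im * k (x i) (x j)
            - (c i).im * (c j).re * k (x i) (x j))
        = ∑ j, ∑ i, ((c j).re * (c i).im * k (x j) (x i)
            - (c j).im * (c i).re * k (x j) (x i)) := Finset.sum_comm
      _ = ∑ j, ∑ i, -(((c i).re * (c j).im * k (x i) (x j)
            - (c i).im * (c j).re * k (x i) (x j))) := by
          refine Finset.sum_congr rfl fun j _ => Finset.sum_congr rfl fun i _ => ?_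
          rw [hsymm (x i) (x j)]
          ring
  rw [Finset.sum_congr rfl fun j _ => Finset.sum_neg_distrib _, Finset.sum_neg_distrib] at hswap
  linarith

lemma bridge_pd (hsymm : ∀ x y, k y x = k x y) :
    IsPositiveDefiniteKernel (fun x y => (k x y : ℂ)) ↔ RPD k := by
  constructor
  · intro h N x c
    have := (h N x (fun i => (c i : ℂ))).2
    rw [quad_re] at this
    simpa using this
  · intro h N x c
    simp only []
    refine ⟨quad_im hsymm x c, ?_⟩
    rw [quad_re]
    have h1 := h N x fun i => (c i).re
    have h2 := h N x fun i => (c i).im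
    exact add_nonneg h1 h2

lemma bridge_nd {d : X → X → ℝ} (hsymm : ∀ x y, d y x = d x y) :
    IsNegativeDefiniteKernelR d ↔ RND d := by
  constructor
  · intro h N x c hc
    have hc' : ∑ j, ((c j : ℂ)) = 0 := by
      rw [← Complex.ofReal_sum, hc, Complex.ofReal_zero]
    have := (h N x (fun i => (c i : ℂ)) hc').2
    rw [quad_re (k := d)] at this
    simpa using this
  · intro h N x c hc
    refine ⟨quad_im hsymm x c, ?_⟩
    rw [quad_re (k := d)]
    have hre : ∑ j, (c j).re = 0 := by rw [← Complex.re_sum, hc, Complex.zero_re]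
    have him : ∑ j, (c j).im = 0 := by rw [← Complex.im_sum, hc, Complex.zero_im]
    have h1 := h N x (fun i => (c i).re) hre
    have h2 := h N x (fun i => (c i).im) him
    linarith

lemma easy_dir {d : X → X → ℝ} (hnonneg : ∀ x y, 0 ≤ d x y)
    (H : ∀ t : ℝ, 0 < t → RPD (fun x y => 1 / (1 + t * d x y))) :
    RND d := by
  intro N x c hc
  -- the key inequality for each t > 0
  have key : ∀ t : ℝ, 0 < t →
      ∑ j, ∑ i, c i * c j * (d (x i) (x j) / (1 + t * d (x i) (x j))) ≤ 0 := by
    intro t ht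
    have hF := H t ht N x c
    simp only [] at hF
    have h0 : ∑ j, ∑ i, c i * c j * (1:ℝ) = 0 := by
      have : ∑ j, ∑ i, c i * c j * (1:ℝ) = ∑ j, ∑ i, c i * c j :=
        Finset.sum_congr rfl fun j _ => Finset.sum_congr rfl fun i _ => by ring
      rw [this, double_sum_mul' c c, hc, mul_zero]
    have hterm : ∀ i j : Fin N, c i * c j * (d (x i) (x j) / (1 + t * d (x i) (x j)))
        = (1/t) * (c i * c j * (1:ℝ) - c i * c j * (1 / (1 + t * d (x i) (x j)))) := by
      intro i j
      have hne : 1 + t * d (x i) (x j) ≠ 0 :=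
        (add_pos_of_pos_of_nonneg one_pos (mul_nonneg ht.le (hnonneg _ _))).ne'
      rw [← mul_sub, mul_left_comm, one_sub_div hne, add_sub_cancel_left, mul_div_assoc,
        ← mul_assoc (1 / t), one_div_mul_cancel ht.ne', one_mul]
    have hsum : ∑ j, ∑ i, c i * c j * (d (x i) (x j) / (1 + t * d (x i) (x j)))
        = (1/t) * ((∑ j, ∑ i, c i * c j * (1:ℝ))
            - ∑ j, ∑ i, c i * c j * (1 / (1 + t * d (x i) (x j)))) := by
      rw [← Finset.sum_sub_distrib, Finset.mul_sum]
      refine Finset.sum_congr rfl fun j _ => ?_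
      rw [← Finset.sum_sub_distrib, Finset.mul_sum]
      exact Finset.sum_congr rfl fun i _ => hterm i j
    rw [hsum, h0, zero_sub]
    have : 0 ≤ (1/t) * (∑ j, ∑ i, c i * c j * (1 / (1 + t * d (x i) (x j)))) :=
      mul_nonneg (by positivity) hF
    linarith
  -- take the limit t → 0⁺
  have htend : Filter.Tendsto
      (fun t : ℝ => ∑ j, ∑ i, c i * c j * (d (x i) (x j) / (1 + t * d (x i) (x j))))
      (nhdsWithin 0 (Set.Ioi 0))
      (nhds (∑ j, ∑ i, c i * c j * d (x i) (x j))) := by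
    refine tendsto_finset_sum _ fun j _ => tendsto_finset_sum _ fun i _ => ?_
    have hd1 : Filter.Tendsto (fun t : ℝ => 1 + t * d (x i) (x j))
        (nhdsWithin 0 (Set.Ioi 0)) (nhds 1) := by
      have hcont : Filter.Tendsto (fun t : ℝ => 1 + t * d (x i) (x j)) (nhds 0) (nhds 1) := by
        have hC : Continuous (fun t : ℝ => 1 + t * d (x i) (x j)) := by continuity
        have := hC.tendsto (0:ℝ)
        simpa using this
      exact hcont.mono_left nhdsWithin_le_nhds
    have : Filter.Tendsto (fun t : ℝ => d (x i) (x j) / (1 + t * d (x i) (x j)))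
        (nhdsWithin 0 (Set.Ioi 0)) (nhds (d (x i) (x j))) := by
      have := Filter.Tendsto.div (tendsto_const_nhds
        (x := d (x i) (x j)) (f := nhdsWithin (0:ℝ) (Set.Ioi 0))) hd1 one_ne_zero
      rw [div_one] at this; exact this
    exact this.const_mul _
  exact le_of_tendsto htend
    (Filter.eventually_of_mem self_mem_nhdsWithin fun t ht => key t ht)

end SchAux

open SchAux in
theorem schoenberg_resolvent {X : Type*} (d : X → X → ℝ)
    (hsymm : ∀ x y : X, d y x = d x y) (hnonneg : ∀ x y : X, 0 ≤ d x y) :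
    IsNegativeDefiniteKernelR d ↔
      ∀ t : ℝ, 0 < t →
        IsPositiveDefiniteKernel
          (fun x y : X => ((1 / (1 + t * d x y) : ℝ) : ℂ)) := by
  constructor
  · intro hnd t ht
    have hrnd : RND d := (bridge_nd hsymm).mp hnd
    have hres := hrnd.resolvent hsymm hnonneg ht
    have hressymm : ∀ x y : X, 1 / (1 + t * d y x) = 1 / (1 + t * d x y) := fun x y => by
      rw [hsymm x y]
    exact (bridge_pd (k := fun x y => 1 / (1 + t * d x y)) hressymm).mpr hres
  · intro H
    refine (bridge_nd hsymm).mpr (easy_dir hnonneg fun t ht => ?_)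
    have hressymm : ∀ x y : X, 1 / (1 + t * d y x) = 1 / (1 + t * d x y) := fun x y => by
      rw [hsymm x y]
    exact (bridge_pd (k := fun x y => 1 / (1 + t * d x y)) hressymm).mp (H t ht)
end

section
/- Let Δ be the real symmetric 5×5 matrix with rows (0,1,1,1,2), (1,0,2,2,1), (1,2,0,2,1), (1,2,2,0,1), (2,1,1,1,0). Then Δ is not negative definite: there exists c : Fin 5 → ℝ with ∑_{j} c_j = 0 and ∑_{j,k} c_k · Δ_{k j} · c_j > 0. -/
open Finset

theorem delta_not_negative_definite :
    let Δ : Matrix (Fin 5) (Fin 5) ℝ :=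
      !![0, 1, 1, 1, 2;
         1, 0, 2, 2, 1;
         1, 2, 0, 2, 1;
         1, 2, 2, 0, 1;
         2, 1, 1, 1, 0]
    ∃ c : Fin 5 → ℝ, (∑ j, c j) = 0 ∧ 0 < ∑ j, ∑ k, c k * Δ k j * c j := by
  intro Δ
  refine ⟨![-3, 1, 1, 3, -2], ?_, ?_⟩ <;>
    simp [Δ, Fin.sum_univ_five, Matrix.cons_val_zero, Matrix.cons_val_one] <;> norm_num
end

section
/- Let Δ be the real symmetric 5×5 matrix with rows (0,1,1,1,2), (1,0,2,2,1), (1,2,0,2,1), (1,2,2,0,1), (2,1,1,1,0). Then there exists t > 0 such that the 5×5 matrix with entries exp(−t·Δ_{jk}) is not positive semidefinite; i.e., there exist t > 0 and c : Fin 5 → ℂ with (∑_{j,k} conj(c_k) · exp(−t·Δ_{k j}) · c_j).re < 0. -/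
open Finset Complex

theorem exp_delta_not_positive_semidefinite :
    let Δ : Matrix (Fin 5) (Fin 5) ℝ :=
      !![0, 1, 1, 1, 2;
         1, 0, 2, 2, 1;
         1, 2, 0, 2, 1;
         1, 2, 2, 0, 1;
         2, 1, 1, 1, 0]
    ∃ t : ℝ, 0 < t ∧ ∃ c : Fin 5 → ℂ,
      (∑ j, ∑ k, (starRingEnd ℂ) (c k) * Complex.exp (-(t : ℂ) * (Δ k j : ℂ)) * c j).re
        < 0 := by
  intro Δ
  refine ⟨Real.log (5/4), Real.log_pos (by norm_num), ![1, -7/10, -7/10, -7/10, 1], ?_⟩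
  have h0 : Complex.exp (-(Real.log (5/4) : ℂ) * (0:ℝ)) = 1 := by
    norm_num [Complex.exp_zero]
  have h1 : Complex.exp (-(Real.log (5/4) : ℂ) * (1:ℝ)) = (4/5 : ℝ) := by
    rw [show -(Real.log (5/4) : ℂ) * (1:ℝ) = ((-Real.log (5/4) : ℝ) : ℂ) by push_cast; ring,
      ← Complex.ofReal_exp, Real.exp_neg, Real.exp_log (by norm_num)]
    norm_num
  have h2 : Complex.exp (-(Real.log (5/4) : ℂ) * (2:ℝ)) = (16/25 : ℝ) := by
    rw [show -(Real.log (5/4) : ℂ) * (2:ℝ) = ((-(Real.log (5/4) + Real.log (5/4)) : ℝ) : ℂ) by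
        push_cast; ring,
      ← Complex.ofReal_exp, Real.exp_neg, Real.exp_add, Real.exp_log (by norm_num : (0:ℝ) < 5/4)]
    norm_num
  simp only [Fin.sum_univ_five, Δ, Matrix.cons_val', Matrix.cons_val_zero, Matrix.cons_val_one,
    Matrix.head_cons, Matrix.head_fin_const, Matrix.empty_val', Matrix.cons_val_fin_one,
    Matrix.cons_val_two, Matrix.cons_val_three, Matrix.cons_val_four, Matrix.tail_cons,
    Matrix.of_apply, h0, h1, h2]
  norm_num [Complex.ext_iff, map_ofNat]
end

section
/- Let X be the space of bounded functions from ℝ to ℂ equipped with the supremum norm ‖x‖ = sup_{s∈ℝ} |x(s)| (e.g., X = lp (fun _ : ℝ => ℂ) ∞ in Mathlib), and let d(x,y) = ‖x − y‖. Then the kernel (x,y) ↦ exp(−d(x,y)) is not positive definite on X: there exist N ∈ ℕ, x₁,…,x_N ∈ X and c₁,…,c_N ∈ ℂ with (∑_{j,k=1}^N conj(c_k) · exp(−‖x_k − x_j‖) · c_j).re < 0. (Witnesses can be taken to be five explicit bounded step functions.) -/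
open Finset Complex ENNReal

noncomputable section

namespace ExpNegSupAux

/-- 5×5 integer distance matrix (a metric with distances in {1,2}). -/
def Dm : Fin 5 → Fin 5 → ℕ :=
  ![![0,1,1,1,2],![1,0,1,1,2],![1,1,0,2,1],![1,1,2,0,1],![2,2,1,1,0]]

/-- partition ℝ into 5 regions -/
def region (s : ℝ) : Fin 5 :=
  if s < 1 then 0 else if s < 2 then 1 else if s < 3 then 2 else if s < 4 then 3 else 4

def dlt : ℝ := Real.log (7/6)

lemma dlt_nonneg : 0 ≤ dlt := Real.log_nonneg (by norm_num)

def g (i : Fin 5) : ℝ → ℂ := fun s => ((Dm i (region s) : ℝ) * dlt : ℝ)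

lemma Dm_le_two : ∀ i j : Fin 5, Dm i j ≤ 2 := by decide

lemma Dm_symm : ∀ i j : Fin 5, Dm i j = Dm j i := by decide

lemma Dm_diag : ∀ i : Fin 5, Dm i i = 0 := by decide

lemma Dm_tri : ∀ k j r : Fin 5, (Dm k r : ℤ) - (Dm j r : ℤ) ≤ (Dm k j : ℤ) := by decide

lemma hg (i : Fin 5) : Memℓp (g i) ∞ := by
  rw [memℓp_infty_iff]
  refine ⟨2 * dlt, ?_⟩
  rintro - ⟨s, rfl⟩
  have h1 : (Dm i (region s) : ℝ) ≤ 2 := by exact_mod_cast Dm_le_two i (region s)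
  have h0 : (0:ℝ) ≤ (Dm i (region s) : ℝ) := Nat.cast_nonneg _
  simp only [g, Complex.norm_real, Real.norm_eq_abs]
  rw [_root_.abs_of_nonneg (mul_nonneg h0 dlt_nonneg)]
  exact mul_le_mul_of_nonneg_right h1 dlt_nonneg

def xfun (i : Fin 5) : lp (fun _ : ℝ => ℂ) ∞ := ⟨g i, hg i⟩

lemma xfun_apply (i : Fin 5) (s : ℝ) : (xfun i : ∀ _ : ℝ, ℂ) s = g i s := rfl

lemma region_cast : ∀ k : Fin 5, region ((k : ℕ) : ℝ) = k := by
  intro k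
  fin_cases k <;> simp [region] <;> norm_num

lemma norm_term (k j : Fin 5) (s : ℝ) :
    ‖g k s - g j s‖ = |(Dm k (region s) : ℝ) - (Dm j (region s) : ℝ)| * dlt := by
  have : g k s - g j s =
      ((((Dm k (region s) : ℝ) - (Dm j (region s) : ℝ)) * dlt : ℝ) : ℂ) := by
    simp only [g]; push_cast; ring
  rw [this, Complex.norm_real, Real.norm_eq_abs, abs_mul, _root_.abs_of_nonneg dlt_nonneg]

lemma norm_x (k j : Fin 5) : ‖xfun k - xfun j‖ = (Dm k j : ℝ) * dlt := by
  rw [lp.norm_eq_ciSup]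
  have hcoe : ⇑(xfun k - xfun j) = fun s => g k s - g j s := by
    rw [lp.coeFn_sub]; rfl
  apply le_antisymm
  · apply ciSup_le
    intro s
    simp only [hcoe]
    rw [norm_term]
    refine mul_le_mul_of_nonneg_right ?_ dlt_nonneg
    rw [abs_sub_le_iff]
    constructor
    · exact_mod_cast Dm_tri k j (region s)
    · rw [Dm_symm k j]; exact_mod_cast Dm_tri j k (region s)
  · have hbdd : BddAbove (Set.range fun s : ℝ => ‖(xfun k - xfun j : ∀ _ : ℝ, ℂ) s‖) :=
      (lp.memℓp (xfun k - xfun j)).bddAbove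
    have := le_ciSup hbdd ((k : ℕ) : ℝ)
    refine le_trans ?_ this
    show ((Dm k j : ℕ) : ℝ) * dlt ≤ ‖g k ((k:ℕ):ℝ) - g j ((k:ℕ):ℝ)‖
    rw [norm_term, region_cast]
    rw [Dm_diag k, Dm_symm k j]
    simp

lemma exp_x (k j : Fin 5) :
    Complex.exp (-(‖xfun k - xfun j‖ : ℂ)) = (((6/7 : ℝ) ^ (Dm k j)) : ℂ) := by
  rw [norm_x]
  have h1 : (-(((Dm k j : ℝ) * dlt : ℝ) : ℂ)) = (((Dm k j : ℕ) * (-dlt) : ℝ) : ℂ) := by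
    push_cast; ring
  rw [h1, ← Complex.ofReal_exp, Real.exp_nat_mul]
  rw [Real.exp_neg, dlt, Real.exp_log (by norm_num : (0:ℝ) < 7/6)]
  norm_num

def cv : Fin 5 → ℝ := ![468, 468, -798, -798, 679]

end ExpNegSupAux

end

open ExpNegSupAux in
theorem exp_neg_sup_dist_not_positive_definite :
    ∃ (N : ℕ) (x : Fin N → lp (fun _ : ℝ => ℂ) ∞) (c : Fin N → ℂ),
      (∑ j, ∑ k,
        (starRingEnd ℂ) (c k) * Complex.exp (-(‖x k - x j‖ : ℂ)) * c j).re < 0 := by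
  refine ⟨5, xfun, fun i => ((cv i : ℝ) : ℂ), ?_⟩
  have hterm : ∀ k j : Fin 5,
      (starRingEnd ℂ) ((cv k : ℝ) : ℂ) * Complex.exp (-(‖xfun k - xfun j‖ : ℂ)) *
        ((cv j : ℝ) : ℂ) = ((cv k * (6/7 : ℝ) ^ (Dm k j) * cv j : ℝ) : ℂ) := by
    intro k j
    rw [exp_x, Complex.conj_ofReal]
    push_cast
    ring
  simp only [hterm]
  have hsum : (∑ j : Fin 5, ∑ k : Fin 5,
      ((cv k * (6/7 : ℝ) ^ (Dm k j) * cv j : ℝ) : ℂ)).re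
      = ∑ j : Fin 5, ∑ k : Fin 5, (cv k * (6/7 : ℝ) ^ (Dm k j) * cv j) := by
    simp only [Complex.re_sum, Complex.ofReal_re]
  rw [hsum]
  simp only [Fin.sum_univ_five, cv, Dm, Matrix.cons_val_zero, Matrix.cons_val_one,
    Matrix.head_cons, Matrix.cons_val_two, Matrix.tail_cons, Matrix.cons_val_three,
    Matrix.cons_val_four, Matrix.head_fin_const]
  norm_num
end

section
/- Let ω : ℝ → ℝ be a continuous nonnegative function whose zero set has Lebesgue measure zero, and let b ∈ (0,2). Let V be the set of continuous functions f : ℝ → ℂ with ∫_ℝ |f(t)|^b ω(t) dt < ∞. Then the kernel S(f,g) = exp(−∫_ℝ |f(t) − g(t)|^b ω(t) dt) is positive definite on V. -/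
open MeasureTheory Complex Finset
set_option maxHeartbeats 1000000

lemma my_gram_nonneg {ι κ : Type*} [Fintype ι] (s : Finset κ) (v : ι → ℝ)
    (g : κ → ι → ℝ) (w : κ → ℝ) (hw : ∀ k ∈ s, 0 ≤ w k) :
    0 ≤ ∑ i, ∑ j, v i * v j * (∑ k ∈ s, w k * (g k i * g k j)) := by
  have h : ∑ i, ∑ j, v i * v j * (∑ k ∈ s, w k * (g k i * g k j))
      = ∑ k ∈ s, w k * (∑ i, v i * g k i) ^ 2 := by
    calc ∑ i, ∑ j, v i * v j * (∑ k ∈ s, w k * (g k i * g k j))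
        = ∑ i, ∑ k ∈ s, ∑ j, v i * v j * (w k * (g k i * g k j)) := by
          refine Finset.sum_congr rfl fun i _ => ?_
          rw [← Finset.sum_comm]
          exact Finset.sum_congr rfl fun j _ => by rw [Finset.mul_sum]
      _ = ∑ k ∈ s, ∑ i, ∑ j, v i * v j * (w k * (g k i * g k j)) := Finset.sum_comm
      _ = ∑ k ∈ s, w k * (∑ i, v i * g k i) ^ 2 := by
          refine Finset.sum_congr rfl fun k _ => ?_
          rw [sq, Finset.sum_mul_sum, Finset.mul_sum]
          exact Finset.sum_congr rfl fun i _ => by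
            rw [Finset.mul_sum]
            exact Finset.sum_congr rfl fun j _ => by ring
  rw [h]
  exact Finset.sum_nonneg fun k hk => mul_nonneg (hw k hk) (sq_nonneg _)

/-- Powers of Gram kernels have nonnegative quadratic forms. -/
lemma my_pow_form_nonneg {N R : ℕ} (B : Matrix (Fin R) (Fin N) ℝ) (v : Fin N → ℝ) (n : ℕ) :
    0 ≤ ∑ i, ∑ j, v i * v j * (∑ r, B r i * B r j) ^ n := by
  have key : ∀ i j : Fin N, (∑ r, B r i * B r j) ^ n
      = ∑ ρ : Fin n → Fin R, (1 : ℝ) * ((∏ m, B (ρ m) i) * (∏ m, B (ρ m) j)) := by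
    intro i j
    have : (∑ r, B r i * B r j) ^ n = ∏ _m : Fin n, (∑ r, B r i * B r j) := by
      rw [Finset.prod_const, Finset.card_univ, Fintype.card_fin]
    rw [this, Finset.prod_univ_sum]
    refine Finset.sum_congr rfl fun ρ _ => ?_
    rw [one_mul, ← Finset.prod_mul_distrib]
  calc (0:ℝ) ≤ ∑ i, ∑ j, v i * v j *
        (∑ ρ : Fin n → Fin R, (1:ℝ) * ((∏ m, B (ρ m) i) * (∏ m, B (ρ m) j))) := by
        exact my_gram_nonneg (κ := Fin n → Fin R) Finset.univ v
          (fun ρ i => ∏ m, B (ρ m) i) (fun _ => 1) (fun _ _ => zero_le_one)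
    _ = _ := by
        refine Finset.sum_congr rfl fun i _ => Finset.sum_congr rfl fun j _ => ?_
        rw [key i j]

/-- Schur: entrywise exponential of a PSD symmetric matrix is PSD. -/
lemma my_exp_form_nonneg {N : ℕ} (K : Fin N → Fin N → ℝ)
    (hsym : ∀ i j, K i j = K j i)
    (hpsd : ∀ v : Fin N → ℝ, 0 ≤ ∑ i, ∑ j, v i * v j * K i j)
    (v : Fin N → ℝ) : 0 ≤ ∑ i, ∑ j, v i * v j * Real.exp (K i j) := by
  classical
  -- get Gram representation
  have hM : (Matrix.of K).PosSemidef := by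
    rw [Matrix.posSemidef_iff_dotProduct_mulVec]
    constructor
    · ext i j
      simp [Matrix.conjTranspose_apply, hsym i j]
    · intro y
      have heq : dotProduct (star y) (Matrix.mulVec (Matrix.of K) y)
          = ∑ i, ∑ j, y i * y j * K i j := by
        simp only [dotProduct, Matrix.mulVec, Matrix.of_apply, Pi.star_apply,
          star_trivial, Finset.mul_sum]
        exact Finset.sum_congr rfl fun i _ => Finset.sum_congr rfl fun j _ => by ring
      rw [heq]
      exact hpsd y
  obtain ⟨R, B, hB⟩ := Matrix.posSemidef_iff_eq_sum_vecMulVec.mp hM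
  have hGram : ∀ i j, K i j = ∑ r, B r i * B r j := by
    intro i j
    have h2 : Matrix.of K i j = (∑ r, Matrix.vecMulVec (B r) (star (B r))) i j := by rw [← hB]
    simpa [Matrix.sum_apply, Matrix.vecMulVec_apply] using h2
  -- expand exp as a series
  have hexp : ∀ i j : Fin N, Real.exp (K i j) = ∑' n : ℕ, K i j ^ n / n.factorial := by
    intro i j
    rw [Real.exp_eq_exp_ℝ, NormedSpace.exp_eq_tsum_div]
  have hsummable : ∀ p : Fin N × Fin N,
      Summable (fun n : ℕ => v p.1 * v p.2 * (K p.1 p.2 ^ n / n.factorial)) :=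
    fun p => (Real.summable_pow_div_factorial (K p.1 p.2)).mul_left _
  calc (0:ℝ) ≤ ∑' n : ℕ, ∑ p : Fin N × Fin N, v p.1 * v p.2 * (K p.1 p.2 ^ n / n.factorial) := by
        refine tsum_nonneg fun n => ?_
        have : ∑ p : Fin N × Fin N, v p.1 * v p.2 * (K p.1 p.2 ^ n / n.factorial)
            = (∑ i, ∑ j, v i * v j * K i j ^ n) / n.factorial := by
          rw [Fintype.sum_prod_type]
          simp only [Finset.sum_div]
          exact Finset.sum_congr rfl fun i _ => Finset.sum_congr rfl fun j _ => by ring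
        rw [this]
        apply div_nonneg _ (Nat.cast_nonneg _)
        have := my_pow_form_nonneg B v n
        calc (0:ℝ) ≤ ∑ i, ∑ j, v i * v j * (∑ r, B r i * B r j) ^ n := this
          _ = ∑ i, ∑ j, v i * v j * K i j ^ n := by
              exact Finset.sum_congr rfl fun i _ => Finset.sum_congr rfl fun j _ => by
                rw [hGram i j]
    _ = ∑ p : Fin N × Fin N, ∑' n : ℕ, v p.1 * v p.2 * (K p.1 p.2 ^ n / n.factorial) := by
        rw [← Summable.tsum_finsetSum (fun p _ => hsummable p)]
    _ = ∑ i, ∑ j, v i * v j * Real.exp (K i j) := by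
        rw [Fintype.sum_prod_type]
        refine Finset.sum_congr rfl fun i _ => Finset.sum_congr rfl fun j _ => ?_
        rw [hexp i j, ← tsum_mul_left]

noncomputable def myJ (a lam : ℝ) : ℝ :=
  ∫ u in Set.Ioi (0:ℝ), (1 - Real.exp (-(lam * u))) * u ^ (-1 - a)

lemma one_sub_exp_neg_le {x : ℝ} (hx : 0 ≤ x) : 1 - Real.exp (-x) ≤ x := by
  have := Real.add_one_le_exp (-x)
  linarith

lemma one_sub_exp_neg_nonneg {x : ℝ} (hx : 0 ≤ x) : 0 ≤ 1 - Real.exp (-x) := by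
  have : Real.exp (-x) ≤ 1 := Real.exp_le_one_iff.mpr (by linarith)
  linarith

lemma myJ_integrableOn {a : ℝ} (ha : a ∈ Set.Ioo (0:ℝ) 1) {lam : ℝ} (hlam : 0 ≤ lam) :
    IntegrableOn (fun u : ℝ => (1 - Real.exp (-(lam * u))) * u ^ (-1 - a))
      (Set.Ioi 0) volume := by
  set f : ℝ → ℝ := fun u => (1 - Real.exp (-(lam * u))) * u ^ (-1 - a) with hf
  have hc : ContinuousOn f (Set.Ioi 0) := by
    apply ContinuousOn.mul
    · exact (continuous_const.sub ((Real.continuous_exp.comp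
        ((continuous_const.mul continuous_id).neg)))).continuousOn
    · exact ContinuousOn.rpow_const continuousOn_id
        (fun x hx => Or.inl (ne_of_gt (Set.mem_Ioi.mp hx)))
  have hsplit : Set.Ioc (0:ℝ) 1 ∪ Set.Ioi (1:ℝ) = Set.Ioi (0:ℝ) :=
    Set.Ioc_union_Ioi_eq_Ioi zero_le_one
  rw [← hsplit]
  apply IntegrableOn.union
  · -- on (0,1]
    have hg : IntegrableOn (fun u : ℝ => lam * u ^ (-a)) (Set.Ioc 0 1) volume := by
      apply Integrable.const_mul
      have : IntervalIntegrable (fun u : ℝ => u ^ (-a)) volume 0 1 :=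
        intervalIntegral.intervalIntegrable_rpow' (by linarith [ha.2])
      rw [intervalIntegrable_iff_integrableOn_Ioc_of_le zero_le_one] at this
      exact this
    refine Integrable.mono' hg ?_ ?_
    · exact (hc.mono (Set.Ioc_subset_Ioi_self)).aestronglyMeasurable measurableSet_Ioc
    · filter_upwards [ae_restrict_mem measurableSet_Ioc] with u hu
      have hu0 : 0 < u := hu.1
      have h1 : 0 ≤ 1 - Real.exp (-(lam * u)) :=
        one_sub_exp_neg_nonneg (by positivity)
      have h2 : 1 - Real.exp (-(lam * u)) ≤ lam * u :=
        one_sub_exp_neg_le (by positivity)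
      have h3 : (0:ℝ) ≤ u ^ (-1 - a) := Real.rpow_nonneg hu0.le _
      rw [Real.norm_eq_abs, _root_.abs_of_nonneg (mul_nonneg h1 h3)]
      calc (1 - Real.exp (-(lam * u))) * u ^ (-1 - a)
          ≤ (lam * u) * u ^ (-1 - a) := mul_le_mul_of_nonneg_right h2 h3
        _ = lam * u ^ (-a) := by
            rw [mul_assoc]
            congr 1
            have : u * u ^ (-1 - a) = u ^ (1 + (-1 - a)) := by
              rw [Real.rpow_add hu0, Real.rpow_one]
            rw [this]
            norm_num
            rw [show (1:ℝ) + (-1 - a) = -a by ring]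
  · -- on (1,∞)
    have hg : IntegrableOn (fun u : ℝ => u ^ (-1 - a)) (Set.Ioi 1) volume :=
      integrableOn_Ioi_rpow_of_lt (by linarith [ha.1]) one_pos
    refine Integrable.mono' hg ?_ ?_
    · exact (hc.mono (t := Set.Ioi (1:ℝ)) (fun x (hx : 1 < x) => show (0:ℝ) < x from lt_trans one_pos hx)).aestronglyMeasurable
        measurableSet_Ioi
    · filter_upwards [ae_restrict_mem measurableSet_Ioi] with u hu
      have hu0 : (0:ℝ) < u := lt_trans one_pos hu
      have h1 : 0 ≤ 1 - Real.exp (-(lam * u)) :=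
        one_sub_exp_neg_nonneg (by positivity)
      have h1' : 1 - Real.exp (-(lam * u)) ≤ 1 := by
        have := Real.exp_nonneg (-(lam * u)); linarith
      have h3 : (0:ℝ) ≤ u ^ (-1 - a) := Real.rpow_nonneg hu0.le _
      rw [Real.norm_eq_abs, _root_.abs_of_nonneg (mul_nonneg h1 h3)]
      calc (1 - Real.exp (-(lam * u))) * u ^ (-1 - a)
          ≤ 1 * u ^ (-1 - a) := mul_le_mul_of_nonneg_right h1' h3
        _ = u ^ (-1 - a) := one_mul _

lemma myJ_scale {a : ℝ} (ha : a ∈ Set.Ioo (0:ℝ) 1) {lam : ℝ} (hlam : 0 < lam) :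
    myJ a lam = lam ^ a * myJ a 1 := by
  set g : ℝ → ℝ := fun w => (1 - Real.exp (-(1 * w))) * w ^ (-1 - a) with hg
  have key : (∫ u in Set.Ioi (0:ℝ), g (lam * u)) = lam⁻¹ * myJ a 1 := by
    have := MeasureTheory.integral_comp_mul_left_Ioi g 0 hlam
    rw [mul_zero] at this
    rw [this, smul_eq_mul]
    rfl
  have hpt : ∀ u ∈ Set.Ioi (0:ℝ),
      (1 - Real.exp (-(lam * u))) * u ^ (-1 - a) = lam ^ (1 + a) * g (lam * u) := by
    intro u hu
    have hu0 : (0:ℝ) < u := hu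
    rw [hg]
    simp only [one_mul]
    have h1 : (lam * u) ^ (-1 - a) = lam ^ (-1 - a) * u ^ (-1 - a) :=
      Real.mul_rpow hlam.le hu0.le
    rw [h1]
    have h2 : lam ^ (1 + a) * lam ^ (-1 - a) = 1 := by
      rw [← Real.rpow_add hlam]
      norm_num
    calc (1 - Real.exp (-(lam * u))) * u ^ (-1 - a)
        = (lam ^ (1 + a) * lam ^ (-1 - a)) * ((1 - Real.exp (-(lam * u))) * u ^ (-1 - a)) := by
          rw [h2, one_mul]
      _ = lam ^ (1 + a) * ((1 - Real.exp (-(lam * u))) * (lam ^ (-1 - a) * u ^ (-1 - a))) := by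
          ring
  have : myJ a lam = ∫ u in Set.Ioi (0:ℝ), lam ^ (1 + a) * g (lam * u) := by
    rw [myJ]
    exact MeasureTheory.setIntegral_congr_fun measurableSet_Ioi hpt
  rw [this, MeasureTheory.integral_const_mul, key]
  rw [← mul_assoc]
  congr 1
  rw [← Real.rpow_neg_one lam, ← Real.rpow_add hlam]
  congr 1
  ring

lemma myJ_one_pos {a : ℝ} (ha : a ∈ Set.Ioo (0:ℝ) 1) : 0 < myJ a 1 := by
  rw [myJ]
  have hint := myJ_integrableOn ha (zero_le_one)
  have hae : 0 ≤ᶠ[ae (volume.restrict (Set.Ioi (0:ℝ)))]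
      fun u : ℝ => (1 - Real.exp (-(1 * u))) * u ^ (-1 - a) := by
    filter_upwards [ae_restrict_mem measurableSet_Ioi] with u hu
    have hu0 : (0:ℝ) < u := hu
    exact mul_nonneg (one_sub_exp_neg_nonneg (by positivity)) (Real.rpow_nonneg hu0.le _)
  rw [MeasureTheory.setIntegral_pos_iff_support_of_nonneg_ae hae hint]
  · have hsub : Set.Ioi (0:ℝ) ⊆
        Function.support (fun u : ℝ => (1 - Real.exp (-(1 * u))) * u ^ (-1 - a)) := by
      intro u hu
      have hu0 : (0:ℝ) < u := hu
      have h1 : 0 < 1 - Real.exp (-(1 * u)) := by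
        have : Real.exp (-(1 * u)) < 1 := Real.exp_lt_one_iff.mpr (by linarith)
        linarith
      have h2 : (0:ℝ) < u ^ (-1 - a) := Real.rpow_pos_of_pos hu0 _
      exact ne_of_gt (mul_pos h1 h2)
    have h0 : (0:ENNReal) < volume (Set.Ioi (0:ℝ)) := by simp
    calc (0:ENNReal) < volume (Set.Ioi (0:ℝ)) := h0
      _ ≤ volume (Function.support (fun u : ℝ => (1 - Real.exp (-(1 * u))) * u ^ (-1 - a))
          ∩ Set.Ioi 0) := by
          apply measure_mono
          exact fun u hu => ⟨hsub hu, hu⟩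

lemma my_rpow_eq {a : ℝ} (ha : a ∈ Set.Ioo (0:ℝ) 1) {lam : ℝ} (hlam : 0 ≤ lam) :
    lam ^ a = (myJ a 1)⁻¹ * myJ a lam := by
  rcases eq_or_lt_of_le hlam with h | h
  · rw [← h]
    rw [Real.zero_rpow (ne_of_gt ha.1)]
    have : myJ a 0 = 0 := by
      rw [myJ]
      simp
    rw [this, mul_zero]
  · rw [myJ_scale ha h]
    rw [← mul_assoc, mul_comm ((myJ a 1)⁻¹) (lam ^ a), mul_assoc,
      inv_mul_cancel₀ (ne_of_gt (myJ_one_pos ha)), mul_one]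

lemma my_gauss_pd {N : ℕ} (v : Fin N → ℝ) (z : Fin N → ℂ) {u : ℝ} (hu : 0 ≤ u) :
    0 ≤ ∑ i, ∑ j, v i * v j * Real.exp (-(u * Complex.normSq (z i - z j))) := by
  set p : Fin N → ℝ := fun i => Real.sqrt (2*u) * (z i).re with hp
  set q : Fin N → ℝ := fun i => Real.sqrt (2*u) * (z i).im with hq
  set e : Fin N → ℝ := fun i => Real.exp (-(u * Complex.normSq (z i))) with he
  set A : Fin N → Fin N → ℝ := fun i j => p i * p j + q i * q j with hA
  have hs : Real.sqrt (2*u) * Real.sqrt (2*u) = 2*u :=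
    Real.mul_self_sqrt (by linarith)
  have hkey : ∀ i j, Real.exp (-(u * Complex.normSq (z i - z j)))
      = e i * e j * Real.exp (A i j) := by
    intro i j
    rw [he]
    simp only
    rw [← Real.exp_add, ← Real.exp_add]
    congr 1
    simp only [hA, hp, hq, Complex.normSq_apply, Complex.sub_re, Complex.sub_im]
    linear_combination (-((z i).re * (z j).re + (z i).im * (z j).im)) * hs
  have hform : ∑ i, ∑ j, v i * v j * Real.exp (-(u * Complex.normSq (z i - z j)))
      = ∑ i, ∑ j, (v i * e i) * (v j * e j) * Real.exp (A i j) := by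
    refine Finset.sum_congr rfl fun i _ => Finset.sum_congr rfl fun j _ => ?_
    rw [hkey i j]; ring
  rw [hform]
  apply my_exp_form_nonneg A
  · intro i j; simp only [hA]; ring
  · intro w
    have h2 : ∀ i j : Fin N, A i j
        = ∑ k ∈ (Finset.univ : Finset (Fin 2)), (1:ℝ) *
          ((if k = 0 then p else q) i * (if k = 0 then p else q) j) := by
      intro i j
      rw [Fin.sum_univ_two]
      simp [hA]
    calc (0:ℝ) ≤ ∑ i, ∑ j, w i * w j *
        (∑ k ∈ (Finset.univ : Finset (Fin 2)), (1:ℝ) *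
          ((if k = 0 then p else q) i * (if k = 0 then p else q) j)) := by
          exact my_gram_nonneg (κ := Fin 2) Finset.univ w
            (fun k => if k = 0 then p else q) (fun _ => 1) (fun _ _ => zero_le_one)
      _ = ∑ i, ∑ j, w i * w j * A i j := by
          exact Finset.sum_congr rfl fun i _ => Finset.sum_congr rfl fun j _ => by
            rw [h2 i j]

lemma my_neg_type_pointwise {N : ℕ} (v : Fin N → ℝ) (hv : ∑ i, v i = 0)
    (z : Fin N → ℂ) {b : ℝ} (hb : b ∈ Set.Ioo (0:ℝ) 2) :
    ∑ i, ∑ j, v i * v j * ‖z i - z j‖ ^ b ≤ 0 := by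
  set a : ℝ := b / 2 with haa
  have ha : a ∈ Set.Ioo (0:ℝ) 1 := ⟨by simp [haa]; linarith [hb.1], by simp [haa]; linarith [hb.2]⟩
  set lam : Fin N → Fin N → ℝ := fun i j => Complex.normSq (z i - z j) with hlam
  have hlamnn : ∀ i j, 0 ≤ lam i j := fun i j => Complex.normSq_nonneg _
  have habs : ∀ i j, ‖z i - z j‖ ^ b = lam i j ^ a := by
    intro i j
    rw [Complex.norm_def, Real.sqrt_eq_rpow, ← Real.rpow_mul (Complex.normSq_nonneg _)]
    congr 1
    rw [haa]; ring
  have hrepr : ∀ i j, ‖z i - z j‖ ^ b = (myJ a 1)⁻¹ * myJ a (lam i j) := by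
    intro i j
    rw [habs i j]
    exact my_rpow_eq ha (hlamnn i j)
  have hsum : ∑ i, ∑ j, v i * v j * ‖z i - z j‖ ^ b
      = (myJ a 1)⁻¹ * ∑ p : Fin N × Fin N, v p.1 * v p.2 * myJ a (lam p.1 p.2) := by
    rw [Fintype.sum_prod_type, Finset.mul_sum]
    refine Finset.sum_congr rfl fun i _ => ?_
    rw [Finset.mul_sum]
    refine Finset.sum_congr rfl fun j _ => ?_
    rw [hrepr i j]; ring
  rw [hsum]
  have hJpos := myJ_one_pos ha
  apply mul_nonpos_of_nonneg_of_nonpos (inv_nonneg.mpr hJpos.le)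
  have hint : ∀ p : Fin N × Fin N, IntegrableOn
      (fun u : ℝ => v p.1 * v p.2 * ((1 - Real.exp (-(lam p.1 p.2 * u))) * u ^ (-1 - a)))
      (Set.Ioi 0) volume :=
    fun p => (myJ_integrableOn ha (hlamnn p.1 p.2)).const_mul _
  have hswap : ∑ p : Fin N × Fin N, v p.1 * v p.2 * myJ a (lam p.1 p.2)
      = ∫ u in Set.Ioi (0:ℝ), ∑ p : Fin N × Fin N,
          v p.1 * v p.2 * ((1 - Real.exp (-(lam p.1 p.2 * u))) * u ^ (-1 - a)) := by
    rw [MeasureTheory.integral_finset_sum _ (fun p _ => hint p)]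
    refine Finset.sum_congr rfl fun p _ => ?_
    rw [myJ, ← MeasureTheory.integral_const_mul]
  rw [hswap]
  apply MeasureTheory.setIntegral_nonpos measurableSet_Ioi
  intro u hu
  have hu0 : (0:ℝ) < u := hu
  have hS0 : ∑ p : Fin N × Fin N, v p.1 * v p.2 = 0 := by
    rw [Fintype.sum_prod_type, ← Finset.sum_mul_sum, hv, mul_zero]
  have hG : 0 ≤ ∑ p : Fin N × Fin N, v p.1 * v p.2 * Real.exp (-(lam p.1 p.2 * u)) := by
    rw [Fintype.sum_prod_type]
    calc (0:ℝ) ≤ ∑ i, ∑ j, v i * v j * Real.exp (-(u * Complex.normSq (z i - z j))) :=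
        my_gauss_pd v z hu0.le
      _ = ∑ i, ∑ j, v i * v j * Real.exp (-(lam i j * u)) := by
          refine Finset.sum_congr rfl fun i _ => Finset.sum_congr rfl fun j _ => ?_
          rw [mul_comm u (lam i j)]
  have hU : (0:ℝ) ≤ u ^ (-1 - a) := Real.rpow_nonneg hu0.le _
  calc ∑ p : Fin N × Fin N,
        v p.1 * v p.2 * ((1 - Real.exp (-(lam p.1 p.2 * u))) * u ^ (-1 - a))
      = (∑ p : Fin N × Fin N, (v p.1 * v p.2 - v p.1 * v p.2 *
          Real.exp (-(lam p.1 p.2 * u)))) * u ^ (-1 - a) := by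
        rw [Finset.sum_mul]
        exact Finset.sum_congr rfl fun p _ => by ring
    _ = (0 - ∑ p : Fin N × Fin N, v p.1 * v p.2 * Real.exp (-(lam p.1 p.2 * u)))
        * u ^ (-1 - a) := by
        rw [Finset.sum_sub_distrib, hS0]
    _ ≤ 0 := by
        apply mul_nonpos_of_nonpos_of_nonneg _ hU
        linarith

lemma my_schoenberg {N : ℕ} (D : Fin N → Fin N → ℝ)
    (hsym : ∀ i j, D i j = D j i) (hdiag : ∀ i, D i i = 0)
    (hNT : ∀ v : Fin N → ℝ, ∑ i, v i = 0 → ∑ i, ∑ j, v i * v j * D i j ≤ 0)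
    (v : Fin N → ℝ) : 0 ≤ ∑ i, ∑ j, v i * v j * Real.exp (-D i j) := by
  rcases Nat.eq_zero_or_pos N with h0 | hpos
  · subst h0; simp
  set i0 : Fin N := ⟨0, hpos⟩ with hi0
  set K : Fin N → Fin N → ℝ := fun i j => D i i0 + D i0 j - D i j with hK
  have hKsym : ∀ i j, K i j = K j i := by
    intro i j
    simp only [hK]
    rw [hsym i j, hsym i i0, hsym i0 j]
    ring
  have hKpsd : ∀ w : Fin N → ℝ, 0 ≤ ∑ i, ∑ j, w i * w j * K i j := by
    intro w
    set s : ℝ := ∑ i, w i with hs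
    set v' : Fin N → ℝ := fun i => w i - (if i = i0 then s else 0) with hv'
    have hv'sum : ∑ i, v' i = 0 := by
      simp only [hv', Finset.sum_sub_distrib, Finset.sum_ite_eq', Finset.mem_univ, if_true]
      rw [← hs]; ring
    have hNT' := hNT v' hv'sum
    -- expand the quadratic form of v'
    have hrow : ∀ i, ∑ j, v' i * v' j * D i j
        = (∑ j, v' i * w j * D i j) - v' i * s * D i i0 := by
      intro i
      have : ∀ j, v' i * v' j * D i j
          = v' i * w j * D i j - (if j = i0 then v' i * s * D i j else 0) := by
        intro j
        simp only [hv']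
        by_cases h : j = i0 <;> simp [h] <;> ring
      rw [Finset.sum_congr rfl fun j _ => this j, Finset.sum_sub_distrib,
        Finset.sum_ite_eq']
      simp
    have hcol : ∀ j, ∑ i, v' i * w j * D i j
        = (∑ i, w i * w j * D i j) - s * w j * D i0 j := by
      intro j
      have : ∀ i, v' i * w j * D i j
          = w i * w j * D i j - (if i = i0 then s * w j * D i j else 0) := by
        intro i
        simp only [hv']
        by_cases h : i = i0 <;> simp [h] <;> ring
      rw [Finset.sum_congr rfl fun i _ => this i, Finset.sum_sub_distrib,
        Finset.sum_ite_eq']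
      simp
    have hexp1 : ∑ i, ∑ j, v' i * v' j * D i j
        = (∑ i, ∑ j, w i * w j * D i j) - (∑ j, s * w j * D i0 j)
          - (∑ i, v' i * s * D i i0) := by
      rw [Finset.sum_congr rfl fun i _ => hrow i, Finset.sum_sub_distrib]
      congr 1
      rw [Finset.sum_comm]
      rw [Finset.sum_congr rfl fun j _ => hcol j, Finset.sum_sub_distrib]
      congr 1
      exact Finset.sum_comm
    have hv'col : ∑ i, v' i * s * D i i0
        = (∑ i, w i * s * D i i0) - s * s * D i0 i0 := by
      have : ∀ i, v' i * s * D i i0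
          = w i * s * D i i0 - (if i = i0 then s * s * D i i0 else 0) := by
        intro i
        simp only [hv']
        by_cases h : i = i0 <;> simp [h] <;> ring
      rw [Finset.sum_congr rfl fun i _ => this i, Finset.sum_sub_distrib,
        Finset.sum_ite_eq']
      simp
    rw [hv'col, hdiag i0] at hexp1
    -- expand the K-form
    have hKexp : ∑ i, ∑ j, w i * w j * K i j
        = (∑ i, w i * s * D i i0) + (∑ j, s * w j * D i0 j)
          - ∑ i, ∑ j, w i * w j * D i j := by
      have hrowK : ∀ i, ∑ j, w i * w j * K i j
          = w i * s * D i i0 + (∑ j, w i * w j * D i0 j) - ∑ j, w i * w j * D i j := by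
        intro i
        have : ∀ j, w i * w j * K i j
            = w i * w j * D i i0 + w i * w j * D i0 j - w i * w j * D i j := by
          intro j; simp only [hK]; ring
        rw [Finset.sum_congr rfl fun j _ => this j, Finset.sum_sub_distrib,
          Finset.sum_add_distrib]
        congr 2
        have : ∑ j, w i * w j * D i i0 = (w i * D i i0) * ∑ j, w j := by
          rw [Finset.mul_sum]
          exact Finset.sum_congr rfl fun j _ => by ring
        rw [this, ← hs]; ring
      rw [Finset.sum_congr rfl fun i _ => hrowK i, Finset.sum_sub_distrib,
        Finset.sum_add_distrib]
      congr 2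
      rw [Finset.sum_comm]
      refine Finset.sum_congr rfl fun j _ => ?_
      have : ∑ i, w i * w j * D i0 j = (w j * D i0 j) * ∑ i, w i := by
        rw [Finset.mul_sum]
        exact Finset.sum_congr rfl fun i _ => by ring
      rw [this, ← hs]; ring
    rw [hKexp]
    linarith
  -- now conclude
  set e : Fin N → ℝ := fun i => Real.exp (-D i i0) with he
  have hfact : ∀ i j, Real.exp (-D i j) = e i * e j * Real.exp (K i j) := by
    intro i j
    simp only [he, hK]
    rw [← Real.exp_add, ← Real.exp_add]
    congr 1
    rw [hsym j i0]
    ring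
  calc (0:ℝ) ≤ ∑ i, ∑ j, (v i * e i) * (v j * e j) * Real.exp (K i j) :=
      my_exp_form_nonneg K hKsym hKpsd (fun i => v i * e i)
    _ = ∑ i, ∑ j, v i * v j * Real.exp (-D i j) := by
      refine Finset.sum_congr rfl fun i _ => Finset.sum_congr rfl fun j _ => ?_
      rw [hfact i j]; ring

lemma my_rpow_bound {b : ℝ} (hb : b ∈ Set.Ioo (0:ℝ) 2) (ζ η : ℂ) :
    ‖ζ - η‖ ^ b ≤ 2 ^ b * (‖ζ‖ ^ b + ‖η‖ ^ b) := by
  set u := ‖ζ‖ with hu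
  set w := ‖η‖ with hw
  have hun : 0 ≤ u := norm_nonneg _
  have hwn : 0 ≤ w := norm_nonneg _
  have h1 : ‖ζ - η‖ ≤ 2 * max u w := by
    calc ‖ζ - η‖ ≤ u + w := by
          rw [hu, hw]
          exact norm_sub_le ζ η
      _ ≤ 2 * max u w := by
          rcases le_total u w with h | h
          · rw [max_eq_right h]; linarith
          · rw [max_eq_left h]; linarith
  calc ‖ζ - η‖ ^ b ≤ (2 * max u w) ^ b :=
      Real.rpow_le_rpow (norm_nonneg _) h1 hb.1.le
    _ = 2 ^ b * (max u w) ^ b := Real.mul_rpow (by norm_num) (le_max_of_le_left hun)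
    _ ≤ 2 ^ b * (u ^ b + w ^ b) := by
        apply mul_le_mul_of_nonneg_left _ (Real.rpow_nonneg (by norm_num) _)
        rcases le_total u w with h | h
        · rw [max_eq_right h]
          have : 0 ≤ u ^ b := Real.rpow_nonneg hun _
          linarith
        · rw [max_eq_left h]
          have : 0 ≤ w ^ b := Real.rpow_nonneg hwn _
          linarith

theorem exp_neg_weighted_integral_kernel_positive_definite
    (ω : ℝ → ℝ) (hω_cont : Continuous ω) (hω_nonneg : ∀ t, 0 ≤ ω t)
    (hω_zero : volume {t : ℝ | ω t = 0} = 0)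
    (b : ℝ) (hb : b ∈ Set.Ioo (0 : ℝ) 2)
    (V : Set (ℝ → ℂ))
    (hV : V = {f : ℝ → ℂ | Continuous f ∧
      Integrable (fun t => ‖f t‖ ^ b * ω t) volume}) :
    ∀ (N : ℕ) (x : Fin N → (ℝ → ℂ)), (∀ i, x i ∈ V) →
      ∀ c : Fin N → ℂ,
        (∑ j, ∑ i, (starRingEnd ℂ) (c i) *
          ((Real.exp (-∫ t, ‖x i t - x j t‖ ^ b * ω t) : ℝ) : ℂ) * c j).im
            = 0 ∧
        0 ≤ (∑ j, ∑ i, (starRingEnd ℂ) (c i) *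
          ((Real.exp (-∫ t, ‖x i t - x j t‖ ^ b * ω t) : ℝ) : ℂ) * c j).re := by
  intro N x hx c
  subst hV
  have hxc : ∀ i, Continuous (x i) := fun i => (hx i).1
  have hxi : ∀ i, Integrable (fun t => ‖x i t‖ ^ b * ω t) volume :=
    fun i => (hx i).2
  set D : Fin N → Fin N → ℝ :=
    fun i j => ∫ t, ‖x i t - x j t‖ ^ b * ω t with hD
  have hDsym : ∀ i j, D i j = D j i := by
    intro i j
    simp only [hD]
    congr 1
    funext t
    rw [norm_sub_rev]
  have hDdiag : ∀ i, D i i = 0 := by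
    intro i
    simp only [hD]
    have : (fun t => ‖x i t - x i t‖ ^ b * ω t) = fun _ => (0:ℝ) := by
      funext t
      rw [sub_self, norm_zero, Real.zero_rpow (ne_of_gt hb.1), zero_mul]
    rw [this, integral_zero]
  have hInt : ∀ i j, Integrable (fun t => ‖x i t - x j t‖ ^ b * ω t) volume := by
    intro i j
    have hcont : Continuous (fun t => ‖x i t - x j t‖ ^ b * ω t) := by
      apply Continuous.mul _ hω_cont
      apply Continuous.rpow_const
      · exact continuous_norm.comp ((hxc i).sub (hxc j))
      · exact fun _ => Or.inr hb.1.le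
    have hbd : Integrable (fun t => 2 ^ b * (‖x i t‖ ^ b * ω t)
        + 2 ^ b * (‖x j t‖ ^ b * ω t)) volume :=
      ((hxi i).const_mul _).add ((hxi j).const_mul _)
    refine Integrable.mono' hbd hcont.aestronglyMeasurable ?_
    filter_upwards with t
    have h1 : 0 ≤ ‖x i t - x j t‖ ^ b * ω t :=
      mul_nonneg (Real.rpow_nonneg (norm_nonneg _) _) (hω_nonneg t)
    rw [Real.norm_eq_abs, _root_.abs_of_nonneg h1]
    calc ‖x i t - x j t‖ ^ b * ω t
        ≤ (2 ^ b * (‖x i t‖ ^ b + ‖x j t‖ ^ b)) * ω t :=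
          mul_le_mul_of_nonneg_right (my_rpow_bound hb _ _) (hω_nonneg t)
      _ = 2 ^ b * (‖x i t‖ ^ b * ω t)
          + 2 ^ b * (‖x j t‖ ^ b * ω t) := by ring
  have hNT : ∀ v : Fin N → ℝ, ∑ i, v i = 0 → ∑ i, ∑ j, v i * v j * D i j ≤ 0 := by
    intro v hv
    have hswap : ∑ i, ∑ j, v i * v j * D i j
        = ∫ t, ∑ p : Fin N × Fin N,
            v p.1 * v p.2 * (‖x p.1 t - x p.2 t‖ ^ b * ω t) := by
      rw [MeasureTheory.integral_finset_sum _
        (fun p _ => (hInt p.1 p.2).const_mul _), Fintype.sum_prod_type]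
      refine Finset.sum_congr rfl fun i _ => Finset.sum_congr rfl fun j _ => ?_
      rw [hD, ← MeasureTheory.integral_const_mul]
    rw [hswap]
    apply MeasureTheory.integral_nonpos
    intro t
    rw [Pi.zero_apply]
    show ∑ p : Fin N × Fin N,
        v p.1 * v p.2 * (‖x p.1 t - x p.2 t‖ ^ b * ω t) ≤ 0
    have hpt : ∑ p : Fin N × Fin N,
        v p.1 * v p.2 * (‖x p.1 t - x p.2 t‖ ^ b * ω t)
        = (∑ i, ∑ j, v i * v j * ‖x i t - x j t‖ ^ b) * ω t := by
      rw [Finset.sum_mul, Fintype.sum_prod_type]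
      refine Finset.sum_congr rfl fun i _ => ?_
      rw [Finset.sum_mul]
      exact Finset.sum_congr rfl fun j _ => by ring
    rw [hpt]
    exact mul_nonpos_of_nonpos_of_nonneg
      (my_neg_type_pointwise v hv (fun i => x i t) hb) (hω_nonneg t)
  have hE := my_schoenberg D hDsym hDdiag hNT
  set a : Fin N → ℝ := fun i => (c i).re with ha
  set d : Fin N → ℝ := fun i => (c i).im with hd
  have hterm_re : ∀ i j, ((starRingEnd ℂ) (c i) *
      ((Real.exp (-D i j) : ℝ) : ℂ) * c j).re
      = (a i * a j + d i * d j) * Real.exp (-D i j) := by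
    intro i j
    simp only [Complex.mul_re, Complex.mul_im, Complex.conj_re, Complex.conj_im,
      Complex.ofReal_re, Complex.ofReal_im]
    ring
  have hterm_im : ∀ i j, ((starRingEnd ℂ) (c i) *
      ((Real.exp (-D i j) : ℝ) : ℂ) * c j).im
      = (a i * d j - d i * a j) * Real.exp (-D i j) := by
    intro i j
    simp only [Complex.mul_re, Complex.mul_im, Complex.conj_re, Complex.conj_im,
      Complex.ofReal_re, Complex.ofReal_im]
    ring
  constructor
  · -- imaginary part
    rw [Complex.im_sum]
    have hsum : ∑ j, (∑ i, (starRingEnd ℂ) (c i) *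
        ((Real.exp (-D i j) : ℝ) : ℂ) * c j).im
        = ∑ j, ∑ i, (a i * d j - d i * a j) * Real.exp (-D i j) := by
      refine Finset.sum_congr rfl fun j _ => ?_
      rw [Complex.im_sum]
      exact Finset.sum_congr rfl fun i _ => hterm_im i j
    rw [hsum]
    have hanti : ∑ j, ∑ i, (a i * d j - d i * a j) * Real.exp (-D i j)
        = -∑ j, ∑ i, (a i * d j - d i * a j) * Real.exp (-D i j) := by
      nth_rewrite 1 [Finset.sum_comm]
      rw [← Finset.sum_neg_distrib]
      refine Finset.sum_congr rfl fun j _ => ?_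
      rw [← Finset.sum_neg_distrib]
      refine Finset.sum_congr rfl fun i _ => ?_
      rw [hDsym j i]
      ring
    linarith [hanti]
  · -- real part
    rw [Complex.re_sum]
    have hsum : ∑ j, (∑ i, (starRingEnd ℂ) (c i) *
        ((Real.exp (-D i j) : ℝ) : ℂ) * c j).re
        = (∑ i, ∑ j, a i * a j * Real.exp (-D i j))
          + ∑ i, ∑ j, d i * d j * Real.exp (-D i j) := by
      calc ∑ j, (∑ i, (starRingEnd ℂ) (c i) * ((Real.exp (-D i j) : ℝ) : ℂ) * c j).re
          = ∑ j, ((∑ i, a i * a j * Real.exp (-D i j))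
              + ∑ i, d i * d j * Real.exp (-D i j)) := by
            refine Finset.sum_congr rfl fun j _ => ?_
            rw [Complex.re_sum, ← Finset.sum_add_distrib]
            refine Finset.sum_congr rfl fun i _ => ?_
            rw [hterm_re i j]
            ring
        _ = (∑ j, ∑ i, a i * a j * Real.exp (-D i j))
            + ∑ j, ∑ i, d i * d j * Real.exp (-D i j) := Finset.sum_add_distrib
        _ = (∑ i, ∑ j, a i * a j * Real.exp (-D i j))
            + ∑ i, ∑ j, d i * d j * Real.exp (-D i j) := by
            congr 1
            · exact Finset.sum_comm
            · exact Finset.sum_comm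
    rw [hsum]
    exact add_nonneg (hE a) (hE d)
end

section
/- The kernel (x,y) ↦ 1/(‖x‖ + ‖y‖) is positive definite on ℂⁿ \ {0}, where ‖·‖ is the Euclidean norm. -/
open Finset Complex

open MeasureTheory Set Filter in
lemma integral_exp_neg_mul_Ioi_zero {b : ℝ} (hb : 0 < b) :
    ∫ t in Ioi (0:ℝ), Real.exp (-b * t) = 1 / b := by
  have hderiv : ∀ t ∈ Ici (0:ℝ),
      HasDerivAt (fun t : ℝ => -Real.exp (-b * t) / b) (Real.exp (-b * t)) t := by
    intro t _
    have h1 : HasDerivAt (fun t : ℝ => -b * t) (-b) t := by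
      simpa using (hasDerivAt_id t).const_mul (-b)
    have h2 := (Real.hasDerivAt_exp (-b * t)).comp t h1
    have h3 := ((h2.neg).div_const b)
    refine h3.congr_deriv ?_
    field_simp
  have hint : IntegrableOn (fun t : ℝ => Real.exp (-b * t)) (Ioi 0) :=
    exp_neg_integrableOn_Ioi 0 hb
  have htend : Tendsto (fun t : ℝ => -Real.exp (-b * t) / b) atTop (nhds 0) := by
    have : Tendsto (fun t : ℝ => -b * t) atTop atBot :=
      Tendsto.const_mul_atTop_of_neg (neg_neg_iff_pos.mpr hb) tendsto_id
    have := (Real.tendsto_exp_atBot.comp this).neg.div_const b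
    simpa using this
  have := integral_Ioi_of_hasDerivAt_of_tendsto' hderiv hint htend
  rw [this]
  simp [div_eq_mul_inv]

theorem inv_sum_norms_positive_definite_on_nonzero (n : ℕ) :
    ∀ (N : ℕ) (x : Fin N → EuclideanSpace ℂ (Fin n)), (∀ i, x i ≠ 0) →
      ∀ c : Fin N → ℂ,
        (∑ j, ∑ i, (starRingEnd ℂ) (c i) *
          ((1 / (‖x i‖ + ‖x j‖) : ℝ) : ℂ) * c j).im = 0 ∧
        0 ≤ (∑ j, ∑ i, (starRingEnd ℂ) (c i) *
          ((1 / (‖x i‖ + ‖x j‖) : ℝ) : ℂ) * c j).re := by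
  intro N x hx c
  set a : Fin N → ℝ := fun i => ‖x i‖ with ha
  have hapos : ∀ i, 0 < a i := fun i => norm_pos_iff.mpr (hx i)
  set S : ℂ := ∑ j, ∑ i, (starRingEnd ℂ) (c i) *
      ((1 / (a i + a j) : ℝ) : ℂ) * c j with hS
  constructor
  · -- imaginary part
    have hconj : (starRingEnd ℂ) S = S := by
      rw [hS, map_sum]
      rw [Finset.sum_comm]
      refine Finset.sum_congr rfl fun j _ => ?_
      rw [map_sum]
      refine Finset.sum_congr rfl fun i _ => ?_
      simp only [map_mul, Complex.conj_conj, Complex.conj_ofReal]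
      rw [add_comm (a j) (a i)]
      ring
    have := Complex.conj_eq_iff_im.mp hconj
    exact this
  · -- real part
    have hre : S.re = ∑ j, ∑ i,
        (1 / (a i + a j)) * ((starRingEnd ℂ) (c i) * c j).re := by
      rw [hS, Complex.re_sum]
      refine Finset.sum_congr rfl fun j _ => ?_
      rw [Complex.re_sum]
      refine Finset.sum_congr rfl fun i _ => ?_
      rw [show (starRingEnd ℂ) (c i) * ((1 / (a i + a j) : ℝ) : ℂ) * c j
          = ((1 / (a i + a j) : ℝ) : ℂ) * ((starRingEnd ℂ) (c i) * c j) by ring]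
      exact Complex.re_ofReal_mul _ _
    rw [hre]
    set F : Fin N → Fin N → ℝ → ℝ := fun i j t =>
      Real.exp (-(a i + a j) * t) * ((starRingEnd ℂ) (c i) * c j).re with hF
    have hFint : ∀ i j, MeasureTheory.IntegrableOn (F i j) (Set.Ioi (0:ℝ)) := by
      intro i j
      exact (exp_neg_integrableOn_Ioi 0 (add_pos (hapos i) (hapos j))).mul_const _
    have hterm : ∀ i j, (1 / (a i + a j)) * ((starRingEnd ℂ) (c i) * c j).re
        = ∫ t in Set.Ioi (0:ℝ), F i j t := by
      intro i j
      rw [hF]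
      rw [MeasureTheory.integral_mul_const,
        integral_exp_neg_mul_Ioi_zero (add_pos (hapos i) (hapos j))]
    simp only [hterm]
    have hswap : ∀ j : Fin N, ∑ i, ∫ t in Set.Ioi (0:ℝ), F i j t
        = ∫ t in Set.Ioi (0:ℝ), ∑ i, F i j t := fun j =>
      (MeasureTheory.integral_finset_sum _ (fun i _ => hFint i j)).symm
    simp only [hswap]
    rw [← MeasureTheory.integral_finset_sum _ (fun j _ =>
      MeasureTheory.integrable_finset_sum _ (fun i _ => hFint i j))]
    refine MeasureTheory.integral_nonneg fun t => ?_
    have key : ∑ j, ∑ i, F i j t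
        = Complex.normSq (∑ i, c i * (Real.exp (-a i * t) : ℝ)) := by
      have := Complex.mul_conj (∑ i, c i * ((Real.exp (-a i * t) : ℝ) : ℂ))
      have hre2 : Complex.normSq (∑ i, c i * ((Real.exp (-a i * t) : ℝ) : ℂ))
          = ((∑ j, c j * ((Real.exp (-a j * t) : ℝ) : ℂ)) *
            (starRingEnd ℂ) (∑ i, c i * ((Real.exp (-a i * t) : ℝ) : ℂ))).re := by
        rw [Complex.mul_conj]; simp
      rw [hre2, map_sum, Finset.sum_mul_sum, Complex.re_sum]
      refine Finset.sum_congr rfl fun j _ => ?_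
      rw [Complex.re_sum]
      refine Finset.sum_congr rfl fun i _ => ?_
      simp only [map_mul, Complex.conj_ofReal, hF]
      rw [show c j * ((Real.exp (-a j * t) : ℝ) : ℂ) *
          ((starRingEnd ℂ) (c i) * ((Real.exp (-a i * t) : ℝ) : ℂ))
          = ((Real.exp (-a i * t) * Real.exp (-a j * t) : ℝ) : ℂ) *
            ((starRingEnd ℂ) (c i) * c j) by push_cast; ring]
      rw [Complex.re_ofReal_mul, ← Real.exp_add]
      ring_nf
    rw [key]
    exact Complex.normSq_nonneg _
end

section
/- On ℂⁿ with the Euclidean norm, the kernel S defined by S(x,y) = (‖x‖ + ‖y‖ − ‖x−y‖)/(‖x‖ + ‖y‖) when x ≠ 0 or y ≠ 0, and S(0,0) = 0, is positive definite on ℂⁿ. -/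
open Finset Complex
open scoped Classical

section Aux
open MeasureTheory Set Real
open scoped RealInnerProductSpace


noncomputable def f1 (a : ℝ) : ℝ → ℝ := fun t => (Ioc 0 a).indicator 1 t - (Ioc a 0).indicator 1 t

lemma f1_of_nonneg {a : ℝ} (h : 0 ≤ a) : f1 a = (Ioc 0 a).indicator 1 := by
  funext t; simp [f1, Ioc_eq_empty (not_lt.mpr h)]

lemma f1_of_neg {a : ℝ} (h : a < 0) : f1 a = fun t => -((Ioc a 0).indicator 1 t) := by
  funext t; simp [f1, Ioc_eq_empty (not_lt.mpr h.le)]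

lemma ind_mul (p q r s : ℝ) : (fun t => ((Ioc p q).indicator (1 : ℝ → ℝ) t) * ((Ioc r s).indicator (1 : ℝ → ℝ) t)) = (Ioc (max p r) (min q s)).indicator (1 : ℝ → ℝ) := by
  funext t
  rw [← Set.Ioc_inter_Ioc]
  by_cases h1 : t ∈ Ioc p q <;> by_cases h2 : t ∈ Ioc r s <;>
    simp [Set.indicator_apply, Set.mem_inter_iff, h1, h2]

lemma int_ind (p q : ℝ) : Integrable ((Ioc p q).indicator (1 : ℝ → ℝ)) := by
  rw [integrable_indicator_iff measurableSet_Ioc]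
  exact integrableOn_const (by simp [Real.volume_Ioc])

lemma integral_ind (p q : ℝ) (h : p ≤ q) : ∫ t, (Ioc p q).indicator (1 : ℝ → ℝ) t = q - p := by
  rw [MeasureTheory.integral_indicator_one measurableSet_Ioc, Real.volume_real_Ioc_of_le h]

lemma key1 (a b : ℝ) : Integrable (fun t => f1 a t * f1 b t) ∧
    (∫ t, f1 a t * f1 b t) = (|a| + |b| - |a - b|) / 2 := by
  rcases le_or_gt 0 a with ha | ha <;> rcases le_or_gt 0 b with hb | hb
  · rw [f1_of_nonneg ha, f1_of_nonneg hb, ind_mul]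
    refine ⟨int_ind _ _, ?_⟩
    rcases le_total a b with hab | hab
    · rw [integral_ind _ _ (by simp [ha, hb])]
      rw [_root_.abs_of_nonneg ha, _root_.abs_of_nonneg hb, _root_.abs_of_nonpos (by linarith)]
      simp [min_eq_left hab]; ring
    · rw [integral_ind _ _ (by simp [ha, hb])]
      rw [_root_.abs_of_nonneg ha, _root_.abs_of_nonneg hb, _root_.abs_of_nonneg (by linarith)]
      simp [min_eq_right hab]
  · rw [f1_of_nonneg ha, f1_of_neg hb]
    have : (fun t => (Ioc 0 a).indicator (1:ℝ→ℝ) t * -((Ioc b 0).indicator 1 t)) =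
        fun t => -((Ioc (max 0 b) (min a 0)).indicator (1:ℝ→ℝ) t) := by
      funext t; rw [← congrFun (ind_mul 0 a b 0) t]; ring
    rw [this]
    have he : Ioc (max 0 b) (min a 0) = ∅ := Ioc_eq_empty (by simp [ha, hb.le])
    simp only [he, Set.indicator_empty]
    constructor
    · simpa using (integrable_zero _ _ _ : Integrable (fun _ : ℝ => (0:ℝ)))
    · simp only [Pi.zero_apply, neg_zero, integral_zero]
      rw [_root_.abs_of_nonneg ha, _root_.abs_of_neg hb, _root_.abs_of_pos (by linarith)]; ring
  · rw [f1_of_neg ha, f1_of_nonneg hb]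
    have : (fun t => -((Ioc a 0).indicator (1:ℝ→ℝ) t) * (Ioc 0 b).indicator 1 t) =
        fun t => -((Ioc (max a 0) (min 0 b)).indicator (1:ℝ→ℝ) t) := by
      funext t; rw [← congrFun (ind_mul a 0 0 b) t]; ring
    rw [this]
    have he : Ioc (max a 0) (min 0 b) = ∅ := Ioc_eq_empty (by simp [hb, ha.le])
    simp only [he, Set.indicator_empty]
    constructor
    · simpa using (integrable_zero _ _ _ : Integrable (fun _ : ℝ => (0:ℝ)))
    · simp only [Pi.zero_apply, neg_zero, integral_zero]
      rw [_root_.abs_of_neg ha, _root_.abs_of_nonneg hb, _root_.abs_of_neg (by linarith)]; ring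
  · rw [f1_of_neg ha, f1_of_neg hb]
    have : (fun t => -((Ioc a 0).indicator (1:ℝ→ℝ) t) * -((Ioc b 0).indicator 1 t)) =
        fun t => (Ioc (max a b) (min 0 0)).indicator (1:ℝ→ℝ) t := by
      funext t; rw [← congrFun (ind_mul a 0 b 0) t]; ring
    rw [this]
    refine ⟨int_ind _ _, ?_⟩
    rcases le_total a b with hab | hab
    · rw [integral_ind _ _ (by simp [ha.le, hb.le])]
      rw [_root_.abs_of_neg ha, _root_.abs_of_neg hb, _root_.abs_of_nonpos (by linarith)]
      simp [max_eq_right hab]; ring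
    · rw [integral_ind _ _ (by simp [ha.le, hb.le])]
      rw [_root_.abs_of_neg ha, _root_.abs_of_neg hb, _root_.abs_of_nonneg (by linarith)]
      simp [max_eq_left hab]; ring

lemma oneD (N : ℕ) (a d : Fin N → ℝ) :
    0 ≤ ∑ j, ∑ i, d i * d j * (|a i| + |a j| - |a i - a j|) := by
  have key : ∀ i j : Fin N, d i * d j * (|a i| + |a j| - |a i - a j|) =
      2 * ∫ t, (d i * f1 (a i) t) * (d j * f1 (a j) t) := by
    intro i j
    have h := key1 (a i) (a j)
    have : (fun t => (d i * f1 (a i) t) * (d j * f1 (a j) t)) =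
        fun t => (d i * d j) * (f1 (a i) t * f1 (a j) t) := by funext t; ring
    rw [this, integral_const_mul, h.2]; ring
  calc (0:ℝ) ≤ 2 * ∫ t, (∑ i, d i * f1 (a i) t)^2 := by
        positivity
    _ = ∑ j, ∑ i, d i * d j * (|a i| + |a j| - |a i - a j|) := by
        have hsq : ∀ t : ℝ, (∑ i, d i * f1 (a i) t)^2 =
            ∑ j, ∑ i, (d i * f1 (a i) t) * (d j * f1 (a j) t) := by
          intro t
          rw [sq, Finset.sum_mul_sum]
          rw [Finset.sum_comm]
        simp_rw [hsq]
        rw [integral_finset_sum _ (fun j _ => integrable_finset_sum _ (fun i _ => by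
          have := (key1 (a i) (a j)).1
          have heq : (fun t => (d i * f1 (a i) t) * (d j * f1 (a j) t)) =
              fun t => (d i * d j) * (f1 (a i) t * f1 (a j) t) := by funext t; ring
          rw [heq]; exact this.const_mul _))]
        rw [Finset.mul_sum]
        refine Finset.sum_congr rfl (fun j _ => ?_)
        rw [integral_finset_sum _ (fun i _ => by
          have := (key1 (a i) (a j)).1
          have heq : (fun t => (d i * f1 (a i) t) * (d j * f1 (a j) t)) =
              fun t => (d i * d j) * (f1 (a i) t * f1 (a j) t) := by funext t; ring
          rw [heq]; exact this.const_mul _)]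
        rw [Finset.mul_sum]
        exact Finset.sum_congr rfl (fun i _ => (key i j).symm)



variable {m : ℕ}

noncomputable def wgt (g : EuclideanSpace ℝ (Fin m)) : ℝ := rexp (-‖g‖^2)

lemma base_int (i0 : Fin m) :
    Integrable (fun h : EuclideanSpace ℝ (Fin m) => |h i0| * rexp (-‖h‖^2)) := by
  have hmaj : Integrable (fun h : EuclideanSpace ℝ (Fin m) => rexp (-(1/2) * ‖h‖^2)) := by
    have := (GaussianFourier.integrable_cexp_neg_mul_sq_norm_add (V := EuclideanSpace ℝ (Fin m))
      (b := (1/2 : ℂ)) (by norm_num) 0 0).norm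
    refine this.congr ?_
    filter_upwards with h
    rw [Complex.norm_exp]
    norm_num
    rw [← Complex.ofReal_pow, Complex.ofReal_re]
  refine hmaj.mono' ?_ ?_
  · apply Continuous.aestronglyMeasurable
    have h1 : Continuous (fun h : EuclideanSpace ℝ (Fin m) => h i0) :=
      (EuclideanSpace.proj i0).continuous
    fun_prop
  · filter_upwards with h
    rw [Real.norm_eq_abs, abs_mul, _root_.abs_abs, _root_.abs_of_pos (Real.exp_pos _)]
    have h1 : |h i0| ≤ ‖h‖ := by
      have := norm_inner_le_norm (𝕜 := ℝ) (EuclideanSpace.single i0 (1:ℝ)) h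
      rwa [EuclideanSpace.inner_single_left, EuclideanSpace.norm_single, norm_one, one_mul,
        conj_trivial, one_mul, Real.norm_eq_abs] at this
    have h2 : ‖h‖ * rexp (-(1/2) * ‖h‖^2) ≤ 1 := by
      have h3 : ‖h‖ ≤ rexp ((1/2) * ‖h‖^2) := by
        have := Real.add_one_le_exp ((1/2) * ‖h‖^2)
        nlinarith [sq_nonneg (‖h‖ - 1), norm_nonneg h]
      calc ‖h‖ * rexp (-(1/2) * ‖h‖^2) ≤ rexp ((1/2) * ‖h‖^2) * rexp (-(1/2) * ‖h‖^2) :=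
            mul_le_mul_of_nonneg_right h3 (Real.exp_pos _).le
        _ = 1 := by rw [← Real.exp_add]; norm_num
    calc |h i0| * rexp (-‖h‖^2) ≤ ‖h‖ * rexp (-‖h‖^2) :=
          mul_le_mul_of_nonneg_right h1 (Real.exp_pos _).le
      _ = (‖h‖ * rexp (-(1/2) * ‖h‖^2)) * rexp (-(1/2) * ‖h‖^2) := by
          rw [mul_assoc, ← Real.exp_add]; ring_nf
      _ ≤ 1 * rexp (-(1/2) * ‖h‖^2) := mul_le_mul_of_nonneg_right h2 (Real.exp_pos _).le
      _ = rexp (-(1/2) * ‖h‖^2) := one_mul _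

lemma phi (i0 : Fin m) (u : EuclideanSpace ℝ (Fin m)) :
    Integrable (fun g : EuclideanSpace ℝ (Fin m) => |⟪u, g⟫| * rexp (-‖g‖^2)) ∧
    (∫ g : EuclideanSpace ℝ (Fin m), |⟪u, g⟫| * rexp (-‖g‖^2)) =
      (∫ h : EuclideanSpace ℝ (Fin m), |h i0| * rexp (-‖h‖^2)) * ‖u‖ := by
  rcases eq_or_ne u 0 with rfl | hu
  · constructor
    · have : (fun g : EuclideanSpace ℝ (Fin m) => |⟪(0 : EuclideanSpace ℝ (Fin m)), g⟫| * rexp (-‖g‖^2)) = fun _ => 0 := by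
        funext g; simp
      rw [this]; exact integrable_zero _ _ _
    · simp
  · set v : EuclideanSpace ℝ (Fin m) := (‖u‖⁻¹ : ℝ) • u with hv
    have hvn : ‖v‖ = 1 := norm_smul_inv_norm hu
    set e0 : EuclideanSpace ℝ (Fin m) := EuclideanSpace.single i0 (1:ℝ) with he0
    have he0n : ‖e0‖ = 1 := by rw [he0, EuclideanSpace.norm_single, norm_one]
    set R := Submodule.reflection (ℝ ∙ (e0 - v))ᗮ with hR
    have hRe0 : R e0 = v := Submodule.reflection_sub (by rw [he0n, hvn])
    have huv : (‖u‖ : ℝ) • v = u := by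
      rw [hv, smul_smul, mul_inv_cancel₀ (norm_ne_zero_iff.mpr hu), one_smul]
    have h2 : ∀ h : EuclideanSpace ℝ (Fin m), ⟪v, R h⟫ = h i0 := by
      intro h
      rw [← hRe0, LinearIsometryEquiv.inner_map_map, he0, EuclideanSpace.inner_single_left]
      simp
    have key : ∀ h : EuclideanSpace ℝ (Fin m), ⟪u, R h⟫ = ‖u‖ * h i0 := by
      intro h
      nth_rewrite 1 [← huv]
      rw [real_inner_smul_left, h2]
    have hmp := R.measurePreserving
    have hemb := R.toHomeomorph.measurableEmbedding
    have hcomp : (fun h : EuclideanSpace ℝ (Fin m) => |⟪u, R h⟫| * rexp (-‖R h‖^2)) =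
        fun h : EuclideanSpace ℝ (Fin m) => ‖u‖ * (|h i0| * rexp (-‖h‖^2)) := by
      funext h
      rw [key h, R.norm_map, abs_mul, _root_.abs_of_nonneg (norm_nonneg u)]
      ring
    constructor
    · rw [← MeasurePreserving.integrable_comp_emb hmp hemb]
      have : ((fun g : EuclideanSpace ℝ (Fin m) => |⟪u, g⟫| * rexp (-‖g‖^2)) ∘ R) =
          fun h : EuclideanSpace ℝ (Fin m) => ‖u‖ * (|h i0| * rexp (-‖h‖^2)) := by
        funext h; simpa using congrFun hcomp h
      rw [this]
      exact (base_int i0).const_mul _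
    · rw [← hmp.integral_comp hemb (fun g => |⟪u, g⟫| * rexp (-‖g‖^2))]
      simp_rw [hcomp]
      rw [integral_const_mul]
      ring


lemma C_pos {m : ℕ} (i0 : Fin m) :
    0 < ∫ h : EuclideanSpace ℝ (Fin m), |h i0| * rexp (-‖h‖^2) := by
  set f : EuclideanSpace ℝ (Fin m) → ℝ := fun h => |h i0| * rexp (-‖h‖^2) with hf
  have hnn : 0 ≤ f := fun h => mul_nonneg (abs_nonneg _) (Real.exp_pos _).le
  refine (integral_pos_iff_support_of_nonneg hnn (base_int i0)).mpr ?_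
  have hker : volume ((Function.support f)ᶜ) = 0 := by
    have hnull : volume ((LinearMap.ker (EuclideanSpace.projₗ i0) : Submodule ℝ (EuclideanSpace ℝ (Fin m))) : Set (EuclideanSpace ℝ (Fin m))) = 0 := by
      apply Measure.addHaar_submodule
      intro htop
      have h1 : EuclideanSpace.single i0 (1:ℝ) ∈ LinearMap.ker (EuclideanSpace.projₗ i0) := by
        rw [htop]; trivial
      rw [LinearMap.mem_ker] at h1
      simp [EuclideanSpace.projₗ] at h1
    refine measure_mono_null ?_ hnull
    intro h hh
    simp only [Function.mem_support, Classical.not_not, mem_compl_iff] at hh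
    have h2 : |h i0| = 0 := by
      rcases mul_eq_zero.mp hh with h1 | h2
      · exact h1
      · exact absurd h2 (Real.exp_ne_zero _)
    simp only [SetLike.mem_coe, LinearMap.mem_ker]
    simpa [EuclideanSpace.projₗ] using abs_eq_zero.mp h2
  by_contra hzero
  push_neg at hzero
  have h0 : volume (Function.support f) = 0 := le_antisymm hzero zero_le
  have huniv := measure_union_le (μ := volume) (Function.support f) (Function.support f)ᶜ
  rw [Set.union_compl_self, h0, hker] at huniv
  have : (0:ENNReal) < volume (Set.univ : Set (EuclideanSpace ℝ (Fin m))) :=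
    isOpen_univ.measure_pos volume ⟨0, Set.mem_univ 0⟩
  simp at huniv
  rw [huniv] at this
  exact lt_irrefl _ this

lemma euclid {m : ℕ} (i0 : Fin m) (N : ℕ) (x : Fin N → EuclideanSpace ℝ (Fin m))
    (d : Fin N → ℝ) :
    0 ≤ ∑ j, ∑ i, d i * d j * (‖x i‖ + ‖x j‖ - ‖x i - x j‖) := by
  set C := ∫ h : EuclideanSpace ℝ (Fin m), |h i0| * rexp (-‖h‖^2) with hC
  have hCpos := C_pos i0
  set A : Fin N → EuclideanSpace ℝ (Fin m) → ℝ := fun i g => ⟪x i, g⟫ with hA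
  have hsub : ∀ i j g, A i g - A j g = ⟪x i - x j, g⟫ := by
    intro i j g; rw [hA]; simp [inner_sub_left]
  have hint : ∀ i j : Fin N, Integrable (fun g : EuclideanSpace ℝ (Fin m) =>
      d i * d j * ((|A i g| + |A j g| - |A i g - A j g|) * rexp (-‖g‖^2))) := by
    intro i j
    apply Integrable.const_mul
    have h1 := (phi i0 (x i)).1
    have h2 := (phi i0 (x j)).1
    have h3 := (phi i0 (x i - x j)).1
    have heq : (fun g : EuclideanSpace ℝ (Fin m) =>
        (|A i g| + |A j g| - |A i g - A j g|) * rexp (-‖g‖^2)) =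
        fun g => |⟪x i, g⟫| * rexp (-‖g‖^2) + |⟪x j, g⟫| * rexp (-‖g‖^2)
          - |⟪x i - x j, g⟫| * rexp (-‖g‖^2) := by
      funext g; rw [← hsub i j g]; simp [hA]; ring
    rw [heq]
    exact (h1.add h2).sub h3
  have hval : ∀ i j : Fin N, (∫ g : EuclideanSpace ℝ (Fin m),
      d i * d j * ((|A i g| + |A j g| - |A i g - A j g|) * rexp (-‖g‖^2))) =
      d i * d j * (C * (‖x i‖ + ‖x j‖ - ‖x i - x j‖)) := by
    intro i j
    rw [integral_const_mul]
    congr 1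
    have heq : (fun g : EuclideanSpace ℝ (Fin m) =>
        (|A i g| + |A j g| - |A i g - A j g|) * rexp (-‖g‖^2)) =
        fun g => |⟪x i, g⟫| * rexp (-‖g‖^2) + |⟪x j, g⟫| * rexp (-‖g‖^2)
          - |⟪x i - x j, g⟫| * rexp (-‖g‖^2) := by
      funext g; rw [← hsub i j g]; simp [hA]; ring
    have e1 := (phi i0 (x i)).1
    have e2 := (phi i0 (x j)).1
    have e3 := (phi i0 (x i - x j)).1
    have h12 : Integrable (fun g : EuclideanSpace ℝ (Fin m) =>
        |⟪x i, g⟫| * rexp (-‖g‖^2) + |⟪x j, g⟫| * rexp (-‖g‖^2)) := e1.add e2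
    rw [heq, integral_sub h12 e3, integral_add e1 e2, (phi i0 (x i)).2, (phi i0 (x j)).2,
      (phi i0 (x i - x j)).2]
    ring
  have hkey : C * ∑ j, ∑ i, d i * d j * (‖x i‖ + ‖x j‖ - ‖x i - x j‖) =
      ∫ g : EuclideanSpace ℝ (Fin m), ∑ j, ∑ i,
        d i * d j * ((|A i g| + |A j g| - |A i g - A j g|) * rexp (-‖g‖^2)) := by
    rw [integral_finset_sum _ (fun j _ => integrable_finset_sum _ (fun i _ => hint i j))]
    rw [Finset.mul_sum]
    refine Finset.sum_congr rfl (fun j _ => ?_)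
    rw [integral_finset_sum _ (fun i _ => hint i j), Finset.mul_sum]
    refine Finset.sum_congr rfl (fun i _ => ?_)
    rw [hval i j]; ring
  have hnn : 0 ≤ ∫ g : EuclideanSpace ℝ (Fin m), ∑ j, ∑ i,
      d i * d j * ((|A i g| + |A j g| - |A i g - A j g|) * rexp (-‖g‖^2)) := by
    apply integral_nonneg
    intro g
    simp only [Pi.zero_apply]
    have := oneD N (fun i => A i g) d
    have heq : ∑ j, ∑ i, d i * d j * ((|A i g| + |A j g| - |A i g - A j g|) * rexp (-‖g‖^2)) =
        (∑ j, ∑ i, d i * d j * (|A i g| + |A j g| - |A i g - A j g|)) * rexp (-‖g‖^2) := by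
      rw [Finset.sum_mul]
      refine Finset.sum_congr rfl (fun j _ => ?_)
      rw [Finset.sum_mul]
      refine Finset.sum_congr rfl (fun i _ => by ring)
    rw [heq]
    exact mul_nonneg this (Real.exp_pos _).le
  have : C * 0 ≤ C * ∑ j, ∑ i, d i * d j * (‖x i‖ + ‖x j‖ - ‖x i - x j‖) := by
    rw [mul_zero, hkey]; exact hnn
  exact le_of_mul_le_mul_left this hCpos

lemma fbm_pd {E : Type*} [NormedAddCommGroup E] [InnerProductSpace ℝ E]
    [FiniteDimensional ℝ E] (N : ℕ) (x : Fin N → E) (d : Fin N → ℝ) :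
    0 ≤ ∑ j, ∑ i, d i * d j * (‖x i‖ + ‖x j‖ - ‖x i - x j‖) := by
  rcases Nat.eq_zero_or_pos (Module.finrank ℝ E) with hm | hm
  · have : Subsingleton E := Module.finrank_zero_iff.mp hm
    have hx : ∀ i, x i = 0 := fun i => Subsingleton.elim _ _
    simp [hx]
  · set m := Module.finrank ℝ E with hmdef
    let b := stdOrthonormalBasis ℝ E
    have := euclid ⟨0, hm⟩ N (fun i => b.repr (x i)) d
    simpa [← map_sub] using this


lemma expint {c : ℝ} (hc : 0 < c) : ∫ t in Set.Ioi (0:ℝ), rexp (-(c * t)) = 1 / c := by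
  have hderiv : ∀ t ∈ Set.Ici (0:ℝ), HasDerivAt (fun t : ℝ => -(rexp (-(c * t)) / c))
      (rexp (-(c * t))) t := by
    intro t _
    have h1 : HasDerivAt (fun t : ℝ => -(c * t)) (-c) t := by
      simpa using ((hasDerivAt_id t).const_mul c).fun_neg
    have h2 := (Real.hasDerivAt_exp (-(c * t))).comp t h1
    have h3 := (h2.div_const c).fun_neg
    refine h3.congr_deriv ?_
    field_simp
  have hint : IntegrableOn (fun t : ℝ => rexp (-(c * t))) (Set.Ioi (0:ℝ)) := by
    have := exp_neg_integrableOn_Ioi 0 hc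
    simpa [neg_mul] using this
  have hlim : Filter.Tendsto (fun t : ℝ => -(rexp (-(c * t)) / c)) Filter.atTop (nhds 0) := by
    have h1 : Filter.Tendsto (fun t : ℝ => c * t) Filter.atTop Filter.atTop :=
      Filter.Tendsto.const_mul_atTop hc Filter.tendsto_id
    have h2 := Real.tendsto_exp_neg_atTop_nhds_zero.comp h1
    have h3 := (h2.div_const c).neg
    simpa using h3
  have := MeasureTheory.integral_Ioi_of_hasDerivAt_of_tendsto' hderiv hint hlim
  rw [this]
  simp

set_option maxHeartbeats 1000000 in
lemma real_form (n N : ℕ) (x : Fin N → EuclideanSpace ℂ (Fin n)) (r : Fin N → ℝ) :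
    0 ≤ ∑ j, ∑ i, r i * r j *
      ((‖x i‖ + ‖x j‖ - ‖x i - x j‖) / (‖x i‖ + ‖x j‖)) := by
  letI : InnerProductSpace ℝ (EuclideanSpace ℂ (Fin n)) :=
    InnerProductSpace.rclikeToReal ℂ (EuclideanSpace ℂ (Fin n))
  have key : ∀ i j : Fin N, r i * r j * ((‖x i‖ + ‖x j‖ - ‖x i - x j‖) / (‖x i‖ + ‖x j‖)) =
      ∫ t in Set.Ioi (0:ℝ), (r i * rexp (-(‖x i‖ * t))) * (r j * rexp (-(‖x j‖ * t))) *
        (‖x i‖ + ‖x j‖ - ‖x i - x j‖) := by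
    intro i j
    rcases eq_or_lt_of_le (by positivity : (0:ℝ) ≤ ‖x i‖ + ‖x j‖) with hs | hs
    · have hxi : ‖x i‖ = 0 := by
        have := norm_nonneg (x i); have := norm_nonneg (x j); linarith
      have hxj : ‖x j‖ = 0 := by
        have := norm_nonneg (x i); have := norm_nonneg (x j); linarith
      have hxij : ‖x i - x j‖ = 0 := by
        rw [norm_eq_zero] at hxi hxj
        rw [hxi, hxj]; simp
      rw [hxi, hxj, hxij]
      simp
    · have hfun : (fun t : ℝ => (r i * rexp (-(‖x i‖ * t))) * (r j * rexp (-(‖x j‖ * t))) *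
          (‖x i‖ + ‖x j‖ - ‖x i - x j‖)) =
          fun t : ℝ => (r i * r j * (‖x i‖ + ‖x j‖ - ‖x i - x j‖)) *
            rexp (-((‖x i‖ + ‖x j‖) * t)) := by
        funext t
        rw [show -((‖x i‖ + ‖x j‖) * t) = -(‖x i‖ * t) + -(‖x j‖ * t) by ring, Real.exp_add]
        ring
      rw [hfun, integral_const_mul, expint hs]
      field_simp
  have hintg : ∀ i j : Fin N, IntegrableOn (fun t : ℝ =>
      (r i * rexp (-(‖x i‖ * t))) * (r j * rexp (-(‖x j‖ * t))) *
        (‖x i‖ + ‖x j‖ - ‖x i - x j‖)) (Set.Ioi (0:ℝ)) := by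
    intro i j
    rcases eq_or_lt_of_le (by positivity : (0:ℝ) ≤ ‖x i‖ + ‖x j‖) with hs | hs
    · have hxi : ‖x i‖ = 0 := by
        have := norm_nonneg (x i); have := norm_nonneg (x j); linarith
      have hxj : ‖x j‖ = 0 := by
        have := norm_nonneg (x i); have := norm_nonneg (x j); linarith
      have hxij : ‖x i - x j‖ = 0 := by
        rw [norm_eq_zero] at hxi hxj
        rw [hxi, hxj]; simp
      have : (fun t : ℝ => (r i * rexp (-(‖x i‖ * t))) * (r j * rexp (-(‖x j‖ * t))) *
          (‖x i‖ + ‖x j‖ - ‖x i - x j‖)) = fun _ => 0 := by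
        funext t; rw [hxi, hxj, hxij]; ring
      rw [this]
      exact integrableOn_zero
    · have hfun : (fun t : ℝ => (r i * rexp (-(‖x i‖ * t))) * (r j * rexp (-(‖x j‖ * t))) *
          (‖x i‖ + ‖x j‖ - ‖x i - x j‖)) =
          fun t : ℝ => (r i * r j * (‖x i‖ + ‖x j‖ - ‖x i - x j‖)) *
            rexp (-((‖x i‖ + ‖x j‖) * t)) := by
        funext t
        rw [show -((‖x i‖ + ‖x j‖) * t) = -(‖x i‖ * t) + -(‖x j‖ * t) by ring, Real.exp_add]
        ring
      rw [hfun]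
      have h1 : IntegrableOn (fun t : ℝ => rexp (-((‖x i‖ + ‖x j‖) * t))) (Set.Ioi (0:ℝ)) := by
        have h0 := exp_neg_integrableOn_Ioi 0 hs
        refine h0.congr_fun (fun t _ => ?_) measurableSet_Ioi
        ring_nf
      exact h1.const_mul _
  calc (0:ℝ) ≤ ∫ t in Set.Ioi (0:ℝ), ∑ j, ∑ i,
        (r i * rexp (-(‖x i‖ * t))) * (r j * rexp (-(‖x j‖ * t))) *
          (‖x i‖ + ‖x j‖ - ‖x i - x j‖) := by
        apply setIntegral_nonneg measurableSet_Ioi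
        intro t _
        exact fbm_pd N x (fun i => r i * rexp (-(‖x i‖ * t)))
    _ = ∑ j, ∑ i, r i * r j * ((‖x i‖ + ‖x j‖ - ‖x i - x j‖) / (‖x i‖ + ‖x j‖)) := by
        rw [integral_finset_sum _ (fun j _ => integrable_finset_sum _ (fun i _ => hintg i j))]
        refine Finset.sum_congr rfl (fun j _ => ?_)
        rw [integral_finset_sum _ (fun i _ => hintg i j)]
        exact Finset.sum_congr rfl (fun i _ => (key i j).symm)

end Aux

theorem normalized_euclidean_similarity_positive_definite (n : ℕ)
    (S : EuclideanSpace ℂ (Fin n) → EuclideanSpace ℂ (Fin n) → ℝ)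
    (hS : ∀ x y, S x y =
      if x = 0 ∧ y = 0 then 0 else (‖x‖ + ‖y‖ - ‖x - y‖) / (‖x‖ + ‖y‖)) :
    IsPositiveDefiniteKernelR S := by
  have hS' : ∀ x y, S x y = (‖x‖ + ‖y‖ - ‖x - y‖) / (‖x‖ + ‖y‖) := by
    intro x y
    rw [hS]
    split_ifs with h
    · obtain ⟨hx, hy⟩ := h
      subst hx; subst hy
      simp
    · rfl
  have hsymm : ∀ a b, S a b = S b a := by
    intro a b
    rw [hS' a b, hS' b a, norm_sub_rev, add_comm ‖a‖]
  intro N x c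
  constructor
  · rw [← Complex.conj_eq_iff_im]
    rw [map_sum]
    calc ∑ j, (starRingEnd ℂ) (∑ i, (starRingEnd ℂ) (c i) * (S (x i) (x j) : ℂ) * c j)
        = ∑ j, ∑ i, (starRingEnd ℂ) (c j) * (S (x j) (x i) : ℂ) * c i := by
          refine Finset.sum_congr rfl (fun j _ => ?_)
          rw [map_sum]
          refine Finset.sum_congr rfl (fun i _ => ?_)
          simp only [map_mul, Complex.conj_conj, Complex.conj_ofReal]
          rw [hsymm (x j) (x i)]
          ring
      _ = ∑ j, ∑ i, (starRingEnd ℂ) (c i) * (S (x i) (x j) : ℂ) * c j := Finset.sum_comm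
  · have hterm : ∀ i j, ((starRingEnd ℂ) (c i) * (S (x i) (x j) : ℂ) * c j).re =
        (c i).re * (c j).re * S (x i) (x j) + (c i).im * (c j).im * S (x i) (x j) := by
      intro i j
      simp only [Complex.mul_re, Complex.mul_im, Complex.conj_re, Complex.conj_im,
        Complex.ofReal_re, Complex.ofReal_im]
      ring
    rw [Complex.re_sum]
    have : ∀ j, (∑ i, (starRingEnd ℂ) (c i) * (S (x i) (x j) : ℂ) * c j).re =
        ∑ i, ((c i).re * (c j).re * S (x i) (x j) + (c i).im * (c j).im * S (x i) (x j)) := by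
      intro j
      rw [Complex.re_sum]
      exact Finset.sum_congr rfl (fun i _ => hterm i j)
    simp_rw [this, Finset.sum_add_distrib]
    apply add_nonneg
    · have := real_form n N x (fun i => (c i).re)
      simp_rw [hS']
      exact this
    · have := real_form n N x (fun i => (c i).im)
      simp_rw [hS']
      exact this
end
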